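/- arXiv:2407.20819 — 5 statements merged into one kernel-verified Lean document; each statement's English description precedes it below -/
import Mathlib

section
/- Under a generic allocation rule, for any fixed stratum h ∈ {1,…,H} and any non-empty subset S ⊆ {1,…,J}, the following inclusions hold up to null events: {liminf_{n→∞} Σ_{j∈S} π_{j,h,n} > 0} ⊆ {liminf_{n→∞} (Σ_{j∈S} N_{j,h,n})/n > 0} ⊆ ∪_{j∈S} {lim_{n→∞} N_{j,h,n} = ∞}. -/
open MeasureTheory ProbabilityTheory Filter Topology

lemma intbdd {Ω : Type*} [MeasurableSpace Ω] {μ : Measure Ω} [IsProbabilityMeasure μ]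
    {f : Ω → ℝ} (C : ℝ) (hf : AEStronglyMeasurable f μ) (hC : ∀ ω, |f ω| ≤ C) :
    Integrable f μ :=
  (integrable_const C).mono' hf (Filter.Eventually.of_forall (fun ω => by
    simpa [Real.norm_eq_abs] using hC ω))

lemma cross_zero {Ω : Type*} {m m0 : MeasurableSpace Ω} (μ : Measure Ω) [IsProbabilityMeasure μ]
    (hm : m ≤ m0)
    {f g : Ω → ℝ} (C : ℝ) (hfm : StronglyMeasurable[m] f) (hfb : ∀ ω, |f ω| ≤ C)
    (hgm : AEStronglyMeasurable g μ) (hgb : ∀ ω, |g ω| ≤ 1)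
    (hg : μ[g|m] =ᵐ[μ] 0) : ∫ ω, f ω * g ω ∂μ = 0 := by
  have hgi : Integrable g μ := intbdd 1 hgm hgb
  have hfgi : Integrable (f * g) μ := by
    refine intbdd C ((hfm.mono hm).aestronglyMeasurable.mul hgm) (fun ω => ?_)
    calc |f ω * g ω| = |f ω| * |g ω| := abs_mul _ _
    _ ≤ C * 1 := mul_le_mul (hfb ω) (hgb ω) (abs_nonneg _) ((abs_nonneg _).trans (hfb ω))
    _ = C := mul_one C
  have h1 : μ[f * g|m] =ᵐ[μ] 0 := by
    refine (condExp_mul_of_stronglyMeasurable_left hfm hfgi hgi).trans ?_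
    filter_upwards [hg] with ω hω
    simp [hω]
  have h2 : ∫ ω, (f * g) ω ∂μ = ∫ ω, (μ[f * g|m]) ω ∂μ := (integral_condExp hm).symm
  calc ∫ ω, f ω * g ω ∂μ = ∫ ω, (f * g) ω ∂μ := rfl
  _ = ∫ ω, (μ[f * g|m]) ω ∂μ := h2
  _ = ∫ ω, (0:Ω → ℝ) ω ∂μ := integral_congr_ae h1
  _ = 0 := by simp

lemma mart_slln {Ω : Type*} [m0 : MeasurableSpace Ω] (μ : Measure Ω) [IsProbabilityMeasure μ]
    (𝓖 : ℕ → MeasurableSpace Ω) (hle : ∀ n, 𝓖 n ≤ m0) (hmono : Monotone 𝓖)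
    (d : ℕ → Ω → ℝ) (hdm : ∀ i, StronglyMeasurable[𝓖 (i+1)] (d i))
    (hdb : ∀ i ω, |d i ω| ≤ 1)
    (hcond : ∀ i, μ[d i|𝓖 i] =ᵐ[μ] 0) :
    ∀ᵐ ω ∂μ, Tendsto (fun n => (∑ i ∈ Finset.range n, d i ω) / n) atTop (𝓝 0) := by
  set M : ℕ → Ω → ℝ := fun n ω => ∑ i ∈ Finset.range n, d i ω with hM
  have hdms : ∀ i, StronglyMeasurable (d i) := fun i => (hdm i).mono (hle _)
  have hMm : ∀ n, StronglyMeasurable[𝓖 n] (M n) := by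
    intro n
    induction n with
    | zero => simpa [hM] using stronglyMeasurable_const
    | succ n ih =>
      have : M (n+1) = fun ω => M n ω + d n ω := by
        funext ω; simp [hM, Finset.sum_range_succ]
      rw [this]
      exact ((ih.mono (hmono (Nat.le_succ n))).add (hdm n))
  have hMms : ∀ n, StronglyMeasurable (M n) := fun n => (hMm n).mono (hle _)
  have hMb : ∀ n ω, |M n ω| ≤ n := by
    intro n ω
    calc |M n ω| ≤ ∑ i ∈ Finset.range n, |d i ω| := Finset.abs_sum_le_sum_abs _ _
    _ ≤ ∑ i ∈ Finset.range n, 1 := Finset.sum_le_sum (fun i _ => hdb i ω)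
    _ = n := by simp
  have ibd : ∀ (k l n : ℕ), Integrable (fun ω => (M n ω)^k * (d n ω)^l) μ := by
    intro k l n
    refine intbdd ((n:ℝ)^k) (((hMms n).pow k).mul ((hdms n).pow l)).aestronglyMeasurable
      (fun ω => ?_)
    rw [abs_mul, abs_pow, abs_pow]
    have h1 : |M n ω|^k ≤ (n:ℝ)^k := pow_le_pow_left₀ (abs_nonneg _) (hMb n ω) k
    have h2 : |d n ω|^l ≤ 1 := pow_le_one₀ (abs_nonneg _) (hdb n ω)
    have h3 := mul_le_mul h1 h2 (pow_nonneg (abs_nonneg _) l) (pow_nonneg (Nat.cast_nonneg n) k)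
    simpa using h3
  have cz : ∀ (k n : ℕ), ∫ ω, (M n ω)^k * d n ω ∂μ = 0 := by
    intro k n
    refine cross_zero μ (hle n) ((n:ℝ)^k) ((hMm n).pow k) (fun ω => ?_)
      (hdms n).aestronglyMeasurable (hdb n) (hcond n)
    rw [abs_pow]
    exact pow_le_pow_left₀ (abs_nonneg _) (hMb n ω) k
  have e2 : ∀ n, ∫ ω, (M n ω)^2 ∂μ ≤ n := by
    intro n
    induction n with
    | zero => simp [hM]
    | succ n ih =>
      have hexp : (fun ω => (M (n+1) ω)^2)
          = fun ω => (M n ω)^2 + (2*((M n ω)^1 * d n ω) + (M n ω)^0 * (d n ω)^2) := by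
        funext ω; simp only [hM, Finset.sum_range_succ]; ring
      have I1 : Integrable (fun ω => (M n ω)^2) μ := by simpa using ibd 2 0 n
      have I2 : Integrable (fun ω => (M n ω)^1 * d n ω) μ := by simpa using ibd 1 1 n
      have I3 : Integrable (fun ω => (M n ω)^0 * (d n ω)^2) μ := ibd 0 2 n
      have I23 : Integrable (fun ω => 2*((M n ω)^1 * d n ω) + (M n ω)^0 * (d n ω)^2) μ :=
        (I2.const_mul 2).add I3
      have key : ∫ ω, ((M n ω)^2 + (2*((M n ω)^1 * d n ω) + (M n ω)^0 * (d n ω)^2)) ∂μ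
          = (∫ ω, (M n ω)^2 ∂μ)
            + (2 * (∫ ω, (M n ω)^1 * d n ω ∂μ) + ∫ ω, (M n ω)^0 * (d n ω)^2 ∂μ) := by
        rw [integral_add I1 I23, integral_add (I2.const_mul 2) I3, integral_const_mul 2]
      rw [hexp, key]
      have h2 : ∫ ω, (M n ω)^1 * d n ω ∂μ = 0 := cz 1 n
      have h3 : ∫ ω, (M n ω)^0 * (d n ω)^2 ∂μ ≤ 1 := by
        have hb : ∀ ω, (M n ω)^0 * (d n ω)^2 ≤ 1 := by
          intro ω
          have : (d n ω)^2 = |d n ω|^2 := (sq_abs _).symm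
          have h1 := pow_le_one₀ (abs_nonneg (d n ω)) (hdb n ω) (n := 2)
          simp only [pow_zero, one_mul]
          linarith
        calc ∫ ω, (M n ω)^0 * (d n ω)^2 ∂μ ≤ ∫ _, (1:ℝ) ∂μ :=
              integral_mono I3 (integrable_const 1) hb
          _ = 1 := by simp
      push_cast
      linarith
  have e4 : ∀ n, ∫ ω, (M n ω)^4 ∂μ ≤ 4 * (n:ℝ)^2 := by
    intro n
    induction n with
    | zero => simp [hM]
    | succ n ih =>
      have hexp : (fun ω => (M (n+1) ω)^4)
          = fun ω => (M n ω)^4 + (4*((M n ω)^3 * d n ω) + (6*((M n ω)^2 * (d n ω)^2)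
            + (4*((M n ω)^1 * (d n ω)^3) + (M n ω)^0 * (d n ω)^4))) := by
        funext ω; simp only [hM, Finset.sum_range_succ]; ring
      have I1 : Integrable (fun ω => (M n ω)^4) μ := by simpa using ibd 4 0 n
      have I2 : Integrable (fun ω => (M n ω)^3 * d n ω) μ := by simpa using ibd 3 1 n
      have I3 : Integrable (fun ω => (M n ω)^2 * (d n ω)^2) μ := ibd 2 2 n
      have I4 : Integrable (fun ω => (M n ω)^1 * (d n ω)^3) μ := ibd 1 3 n
      have I5 : Integrable (fun ω => (M n ω)^0 * (d n ω)^4) μ := ibd 0 4 n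
      have I45 : Integrable (fun ω => 4*((M n ω)^1*(d n ω)^3) + (M n ω)^0*(d n ω)^4) μ :=
        (I4.const_mul 4).add I5
      have I345 : Integrable (fun ω => 6*((M n ω)^2*(d n ω)^2)
          + (4*((M n ω)^1*(d n ω)^3) + (M n ω)^0*(d n ω)^4)) μ := (I3.const_mul 6).add I45
      have I2345 : Integrable (fun ω => 4*((M n ω)^3 * d n ω) + (6*((M n ω)^2*(d n ω)^2)
          + (4*((M n ω)^1*(d n ω)^3) + (M n ω)^0*(d n ω)^4))) μ := (I2.const_mul 4).add I345
      have key : ∫ ω, ((M n ω)^4 + (4*((M n ω)^3 * d n ω) + (6*((M n ω)^2 * (d n ω)^2)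
            + (4*((M n ω)^1 * (d n ω)^3) + (M n ω)^0 * (d n ω)^4)))) ∂μ
          = (∫ ω, (M n ω)^4 ∂μ) + (4*(∫ ω, (M n ω)^3 * d n ω ∂μ)
            + (6*(∫ ω, (M n ω)^2 * (d n ω)^2 ∂μ)
            + (4*(∫ ω, (M n ω)^1 * (d n ω)^3 ∂μ) + ∫ ω, (M n ω)^0 * (d n ω)^4 ∂μ))) := by
        rw [integral_add I1 I2345, integral_add (I2.const_mul 4) I345,
          integral_add (I3.const_mul 6) I45, integral_add (I4.const_mul 4) I5,
          integral_const_mul 4, integral_const_mul 6, integral_const_mul 4]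
      rw [hexp, key]
      have h2 : ∫ ω, (M n ω)^3 * d n ω ∂μ = 0 := cz 3 n
      have h3 : ∫ ω, (M n ω)^2 * (d n ω)^2 ∂μ ≤ n := by
        have hb : ∀ ω, (M n ω)^2 * (d n ω)^2 ≤ (M n ω)^2 := by
          intro ω
          have h1 : (d n ω)^2 ≤ 1 := by
            have := pow_le_one₀ (abs_nonneg (d n ω)) (hdb n ω) (n := 2)
            have h2' := sq_abs (d n ω)
            linarith
          nlinarith [sq_nonneg (M n ω)]
        calc ∫ ω, (M n ω)^2 * (d n ω)^2 ∂μ ≤ ∫ ω, (M n ω)^2 ∂μ :=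
              integral_mono I3 (by simpa using ibd 2 0 n) hb
          _ ≤ n := e2 n
      have h4 : ∫ ω, (M n ω)^1 * (d n ω)^3 ∂μ ≤ ((n:ℝ) + 1)/2 := by
        have hb : ∀ ω, (M n ω)^1 * (d n ω)^3 ≤ ((M n ω)^2 + 1)/2 := by
          intro ω
          have hd1 : |d n ω|^3 ≤ 1 := pow_le_one₀ (abs_nonneg _) (hdb n ω)
          have h1 : |(M n ω)^1 * (d n ω)^3| ≤ |M n ω| := by
            rw [abs_mul, abs_pow, abs_pow]
            nlinarith [abs_nonneg (M n ω), pow_nonneg (abs_nonneg (d n ω)) 3]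
          have h2' : |M n ω| ≤ ((M n ω)^2 + 1)/2 := by
            nlinarith [sq_abs (M n ω), sq_nonneg (|M n ω| - 1)]
          exact (le_abs_self _).trans (h1.trans h2')
        have Ih : Integrable (fun ω => ((M n ω)^2 + 1)/2) μ :=
          (((by simpa using ibd 2 0 n : Integrable (fun ω => (M n ω)^2) μ).add
            (integrable_const 1)).div_const 2)
        have key2 : ∫ ω, ((M n ω)^2 + 1)/2 ∂μ = ((∫ ω, (M n ω)^2 ∂μ) + 1)/2 := by
          rw [integral_div, integral_add (by simpa using ibd 2 0 n : Integrable
            (fun ω => (M n ω)^2) μ) (integrable_const 1)]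
          simp
        calc ∫ ω, (M n ω)^1 * (d n ω)^3 ∂μ ≤ ∫ ω, ((M n ω)^2 + 1)/2 ∂μ :=
              integral_mono I4 Ih hb
          _ = ((∫ ω, (M n ω)^2 ∂μ) + 1)/2 := key2
          _ ≤ ((n:ℝ) + 1)/2 := by have := e2 n; linarith
      have h5 : ∫ ω, (M n ω)^0 * (d n ω)^4 ∂μ ≤ 1 := by
        have hb : ∀ ω, (M n ω)^0 * (d n ω)^4 ≤ 1 := by
          intro ω
          have h1 : |d n ω|^4 ≤ 1 := pow_le_one₀ (abs_nonneg _) (hdb n ω)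
          have h2' : (d n ω)^4 = |d n ω|^4 := by
            rw [← abs_pow, abs_of_nonneg (by positivity : (0:ℝ) ≤ (d n ω)^4)]
          simp only [pow_zero, one_mul]
          linarith
        calc ∫ ω, (M n ω)^0 * (d n ω)^4 ∂μ ≤ ∫ _, (1:ℝ) ∂μ :=
              integral_mono I5 (integrable_const 1) hb
          _ = 1 := by simp
      push_cast
      nlinarith [h2, h3, h4, h5, ih]
  
  have hgmeas : ∀ n : ℕ, Measurable (fun ω => ENNReal.ofReal ((M n ω / n)^4)) := by
    intro n
    exact (((hMms n).measurable.div_const (n:ℝ)).pow_const 4).ennreal_ofReal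
  have hbound : ∀ n : ℕ, ∫⁻ ω, ENNReal.ofReal ((M n ω / n)^4) ∂μ
      ≤ ENNReal.ofReal (4 / (n:ℝ)^2) := by
    intro n
    rcases Nat.eq_zero_or_pos n with h0 | hpos
    · subst h0; simp [hM]
    · have hn : (0:ℝ) < n := Nat.cast_pos.mpr hpos
      have hid : (fun ω => (M n ω / (n:ℝ))^4) = fun ω => (M n ω)^4 / (n:ℝ)^4 := by
        funext ω; rw [div_pow]
      have hint : Integrable (fun ω => (M n ω / (n:ℝ))^4) μ := by
        rw [hid]
        exact (by simpa using ibd 4 0 n : Integrable (fun ω => (M n ω)^4) μ).div_const _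
      have heq : ∫⁻ ω, ENNReal.ofReal ((M n ω / n)^4) ∂μ
          = ENNReal.ofReal (∫ ω, (M n ω / n)^4 ∂μ) :=
        (ofReal_integral_eq_lintegral_ofReal hint (Filter.Eventually.of_forall
          (fun ω => by positivity))).symm
      rw [heq]
      apply ENNReal.ofReal_le_ofReal
      have hval : ∫ ω, (M n ω / n)^4 ∂μ = (∫ ω, (M n ω)^4 ∂μ) / (n:ℝ)^4 := by
        rw [hid]; exact integral_div _ _
      rw [hval, div_le_div_iff₀ (by positivity) (by positivity)]
      have h4n := e4 n
      nlinarith [pow_pos hn 2, pow_pos hn 4, sq_nonneg ((n:ℝ)), mul_le_mul_of_nonneg_right h4n (sq_nonneg (n:ℝ))]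
  have hsummable : Summable (fun n : ℕ => 4 / (n:ℝ)^2) := by
    have h1 : Summable (fun n : ℕ => 1 / (n:ℝ)^2) := by
      simpa using Real.summable_one_div_nat_pow.mpr (by norm_num : 1 < 2)
    simpa [div_eq_mul_inv] using h1.mul_left 4
  have htop : ∑' n : ℕ, ∫⁻ ω, ENNReal.ofReal ((M n ω / n)^4) ∂μ ≠ ⊤ := by
    refine ne_top_of_le_ne_top ?_ (ENNReal.tsum_le_tsum hbound)
    rw [← ENNReal.ofReal_tsum_of_nonneg (fun n => by positivity) hsummable]
    exact ENNReal.ofReal_ne_top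
  have hlint := lintegral_tsum (μ := μ) (fun n => (hgmeas n).aemeasurable)
  have hae : ∀ᵐ ω ∂μ, ∑' n : ℕ, ENNReal.ofReal ((M n ω / n)^4) < ⊤ := by
    apply ae_lt_top (Measurable.ennreal_tsum hgmeas)
    rw [hlint]; exact htop
  filter_upwards [hae] with ω hω
  have h1 : Tendsto (fun n => ENNReal.ofReal ((M n ω / n)^4)) atTop (𝓝 0) :=
    ENNReal.tendsto_atTop_zero_of_tsum_ne_top hω.ne
  have h2 : Tendsto (fun n => (M n ω / n)^4) atTop (𝓝 0) := by
    have h3 := (ENNReal.tendsto_toReal (by simp : (0:ENNReal) ≠ ⊤)).comp h1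
    simp only [ENNReal.toReal_zero] at h3
    refine h3.congr (fun n => ?_)
    simp only [Function.comp_apply,
      ENNReal.toReal_ofReal (by positivity : (0:ℝ) ≤ (M n ω / n)^4)]
  rw [Metric.tendsto_atTop] at h2 ⊢
  intro ε hε
  obtain ⟨Nk, hNk⟩ := h2 (ε^4) (by positivity)
  refine ⟨Nk, fun n hn => ?_⟩
  have hd := hNk n hn
  rw [Real.dist_eq, sub_zero] at hd ⊢
  have h4 : |M n ω / n|^4 < ε^4 := by rwa [abs_pow] at hd
  exact lt_of_pow_lt_pow_left₀ 4 hε.le h4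

theorem stmt7
    {Ω : Type*} [MeasurableSpace Ω] (μ : Measure Ω) [IsProbabilityMeasure μ]
    (H J : ℕ) (hH : 1 ≤ H) (hJ : 2 ≤ J)
    (Z : ℕ → Ω → Fin H) (δ : ℕ → Ω → Fin J) (Y : ℕ → Ω → ℝ)
    (p : Fin H → ℝ)
    (hZmeas : ∀ i, Measurable (Z i)) (hδmeas : ∀ i, Measurable (δ i))
    (hYmeas : ∀ i, Measurable (Y i))
    (hY01 : ∀ i ω, Y i ω = 0 ∨ Y i ω = 1)
    (hp : ∀ h, 0 < p h)
    (𝓕 : ℕ → MeasurableSpace Ω)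
    (h𝓕 : ∀ n, 𝓕 n = ⨆ i ∈ Finset.range n,
      (MeasurableSpace.comap (Z i) ⊤ ⊔ MeasurableSpace.comap (δ i) ⊤ ⊔ MeasurableSpace.comap (Y i) ⊤))
    (hZlaw : ∀ i h, μ {ω | Z i ω = h} = ENNReal.ofReal (p h))
    (hZindep : ∀ i, Indep (MeasurableSpace.comap (Z i) ⊤) (𝓕 i) μ)
    (N : Fin J → Fin H → ℕ → Ω → ℝ)
    (hN : ∀ j h n ω, N j h n ω = ∑ i ∈ Finset.range n, if Z i ω = h ∧ δ i ω = j then 1 else 0)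
    (π : Fin J → Fin H → ℕ → Ω → ℝ)
    (hπmeas : ∀ j h n, Measurable[𝓕 n] (π j h n))
    (hπmem : ∀ j h n ω, π j h n ω ∈ Set.Icc (0:ℝ) 1)
    (hπsum : ∀ h n ω, ∑ j, π j h n ω = 1)
    (halloc : ∀ n j', μ[(fun ω => if δ n ω = j' then (1:ℝ) else 0) |
        𝓕 n ⊔ MeasurableSpace.comap (Z n) ⊤]
      =ᵐ[μ] fun ω => ∑ h', (if Z n ω = h' then (1:ℝ) else 0) * π j' h' n ω)
    (h : Fin H) (T : Finset (Fin J)) (hT : T.Nonempty) :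
    μ ({ω | 0 < Filter.liminf (fun n => ∑ j ∈ T, π j h n ω) atTop} \
       {ω | 0 < Filter.liminf (fun n => (∑ j ∈ T, N j h n ω) / (n : ℝ)) atTop}) = 0 ∧
    μ ({ω | 0 < Filter.liminf (fun n => (∑ j ∈ T, N j h n ω) / (n : ℝ)) atTop} \
       ⋃ j ∈ T, {ω | Tendsto (fun n => N j h n ω) atTop atTop}) = 0 := by
  classical
  -- σ-algebra facts
  have hleY : ∀ i, MeasurableSpace.comap (Y i) ⊤ ≤ ‹MeasurableSpace Ω› := by
    intro i s hs
    obtain ⟨s', -, rfl⟩ := hs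
    have hset : Y i ⁻¹' s' = {ω | Y i ω = 0 ∧ (0:ℝ) ∈ s'} ∪ {ω | Y i ω = 1 ∧ (1:ℝ) ∈ s'} := by
      ext ω
      rcases hY01 i ω with h0 | h1
      · simp [Set.mem_preimage, h0]
      · simp [Set.mem_preimage, h1]
    rw [hset]
    have m0' : MeasurableSet {ω | Y i ω = 0} := hYmeas i (measurableSet_singleton 0)
    have m1' : MeasurableSet {ω | Y i ω = 1} := hYmeas i (measurableSet_singleton 1)
    refine MeasurableSet.union ?_ ?_
    · by_cases h0 : (0:ℝ) ∈ s'
      · simpa [h0] using m0'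
      · simp [h0]
    · by_cases h1 : (1:ℝ) ∈ s'
      · simpa [h1] using m1'
      · simp [h1]
  have hle : ∀ n, 𝓕 n ≤ ‹MeasurableSpace Ω› := by
    intro n
    rw [h𝓕 n]
    refine iSup_le fun i => iSup_le fun _ => ?_
    exact sup_le (sup_le (hZmeas i).comap_le (hδmeas i).comap_le) (hleY i)
  have hmono : Monotone 𝓕 := by
    intro a b hab
    rw [h𝓕 a, h𝓕 b]
    refine iSup_le fun i => iSup_le fun hi => ?_
    exact le_iSup_of_le i (le_iSup_of_le
      (Finset.mem_range.mpr (lt_of_lt_of_le (Finset.mem_range.mp hi) hab)) le_rfl)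
  have hsub : ∀ i, (MeasurableSpace.comap (Z i) ⊤ ⊔ MeasurableSpace.comap (δ i) ⊤
      ⊔ MeasurableSpace.comap (Y i) ⊤) ≤ 𝓕 (i+1) := by
    intro i
    rw [h𝓕 (i+1)]
    exact le_iSup_of_le i (le_iSup_of_le (Finset.self_mem_range_succ i) le_rfl)
  have hZsub : ∀ i, MeasurableSpace.comap (Z i) ⊤ ≤ 𝓕 (i+1) :=
    fun i => ((le_sup_left (b := MeasurableSpace.comap (δ i) ⊤)).trans le_sup_left).trans (hsub i)
  have hδsub : ∀ i, MeasurableSpace.comap (δ i) ⊤ ≤ 𝓕 (i+1) :=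
    fun i => ((le_sup_right (a := MeasurableSpace.comap (Z i) ⊤)).trans le_sup_left).trans (hsub i)
  have hp1 : p h ≤ 1 := by
    have h1 := hZlaw 0 h
    have hle1 : μ {ω | Z 0 ω = h} ≤ 1 := prob_le_one
    rw [h1] at hle1
    exact ENNReal.ofReal_le_one.mp hle1
  -- the increment processes
  set X : ℕ → Ω → ℝ := fun i ω => ∑ j ∈ T, (if Z i ω = h ∧ δ i ω = j then (1:ℝ) else 0) with hX
  set c : ℕ → Ω → ℝ := fun i ω => p h * ∑ j ∈ T, π j h i ω with hc
  set d : ℕ → Ω → ℝ := fun i ω => X i ω - c i ω with hd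
  have hXbound : ∀ i ω, 0 ≤ X i ω ∧ X i ω ≤ 1 := by
    intro i ω
    constructor
    · refine Finset.sum_nonneg fun j _ => ?_
      by_cases hcc : (Z i ω = h ∧ δ i ω = j) <;> simp [hcc]
    · by_cases hz : Z i ω = h
      · have hXi : X i ω = ∑ j ∈ T, (if δ i ω = j then (1:ℝ) else 0) :=
          Finset.sum_congr rfl (fun j _ => by
            simp only [hz, eq_self_iff_true, true_and])
        rw [hXi, Finset.sum_ite_eq]
        split_ifs <;> norm_num
      · have hXi : X i ω = 0 := by simp [hX, hz]
        simp [hXi]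
  have hπsumT : ∀ i ω, 0 ≤ ∑ j ∈ T, π j h i ω ∧ ∑ j ∈ T, π j h i ω ≤ 1 := by
    intro i ω
    refine ⟨Finset.sum_nonneg fun j _ => (hπmem j h i ω).1, ?_⟩
    calc ∑ j ∈ T, π j h i ω ≤ ∑ j, π j h i ω :=
          Finset.sum_le_sum_of_subset_of_nonneg (Finset.subset_univ T)
            (fun j _ _ => (hπmem j h i ω).1)
      _ = 1 := hπsum h i ω
  have hcbound : ∀ i ω, 0 ≤ c i ω ∧ c i ω ≤ 1 := by
    intro i ω
    have h1 := (hπsumT i ω).1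
    have h2 := (hπsumT i ω).2
    constructor
    · exact mul_nonneg (hp h).le h1
    · calc p h * ∑ j ∈ T, π j h i ω ≤ 1 * 1 :=
          mul_le_mul hp1 h2 h1 zero_le_one
        _ = 1 := one_mul 1
  have hdb : ∀ i ω, |d i ω| ≤ 1 := by
    intro i ω
    have h1 := hXbound i ω
    have h2 := hcbound i ω
    rw [abs_le]
    constructor <;> simp only [hd] <;> linarith
  have hXmeas : ∀ i, Measurable[𝓕 (i+1)] (X i) := by
    intro i
    refine Finset.measurable_sum _ fun j _ => ?_
    have hsetZ : MeasurableSet[𝓕 (i+1)] {ω | Z i ω = h} :=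
      hZsub i _ (MeasurableSpace.measurableSet_comap.mpr ⟨{h}, MeasurableSpace.measurableSet_top, rfl⟩)
    have hsetδ : MeasurableSet[𝓕 (i+1)] {ω | δ i ω = j} :=
      hδsub i _ (MeasurableSpace.measurableSet_comap.mpr ⟨{j}, MeasurableSpace.measurableSet_top, rfl⟩)
    exact Measurable.ite (hsetZ.inter hsetδ) measurable_const measurable_const
  have hcmeas : ∀ i, Measurable[𝓕 i] (c i) :=
    fun i => (Finset.measurable_sum _ fun j _ => hπmeas j h i).const_mul (p h)
  have hdm : ∀ i, StronglyMeasurable[𝓕 (i+1)] (d i) := by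
    intro i
    exact ((hXmeas i).sub ((hcmeas i).mono (hmono (Nat.le_succ i)) le_rfl)).stronglyMeasurable
  have hXint : ∀ i, Integrable (X i) μ := by
    intro i
    refine intbdd 1 ((hXmeas i).mono (hle (i+1)) le_rfl).aestronglyMeasurable fun ω => ?_
    have := hXbound i ω
    rw [abs_le]; constructor <;> linarith
  have hcint : ∀ i, Integrable (c i) μ := by
    intro i
    refine intbdd 1 ((hcmeas i).mono (hle i) le_rfl).aestronglyMeasurable fun ω => ?_
    have := hcbound i ω
    rw [abs_le]; constructor <;> linarith
  
  -- conditional expectation of the increments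
  have hcond : ∀ i, μ[d i | 𝓕 i] =ᵐ[μ] 0 := by
    intro i
    have hm : 𝓕 i ≤ ‹MeasurableSpace Ω› := hle i
    have hZle : MeasurableSpace.comap (Z i) ⊤ ≤ ‹MeasurableSpace Ω› := (hZmeas i).comap_le
    have hbig : 𝓕 i ⊔ MeasurableSpace.comap (Z i) ⊤ ≤ ‹MeasurableSpace Ω› := sup_le hm hZle
    have hmbig : 𝓕 i ≤ 𝓕 i ⊔ MeasurableSpace.comap (Z i) ⊤ := le_sup_left
    have hχmc : Measurable[MeasurableSpace.comap (Z i) ⊤]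
        (fun ω => if Z i ω = h then (1:ℝ) else 0) := by
      refine Measurable.ite ?_ measurable_const measurable_const
      exact MeasurableSpace.measurableSet_comap.mpr ⟨{h}, MeasurableSpace.measurableSet_top, rfl⟩
    have hχm : Measurable[𝓕 i ⊔ MeasurableSpace.comap (Z i) ⊤]
        (fun ω => if Z i ω = h then (1:ℝ) else 0) :=
      hχmc.mono le_sup_right le_rfl
    have hχb : ∀ ω, |(if Z i ω = h then (1:ℝ) else 0)| ≤ 1 := by
      intro ω; split_ifs <;> norm_num
    have hχint : Integrable (fun ω => if Z i ω = h then (1:ℝ) else 0) μ :=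
      intbdd 1 (hχmc.mono hZle le_rfl).aestronglyMeasurable hχb
    have hgj : ∀ j : Fin J,
        μ[(fun ω => if Z i ω = h ∧ δ i ω = j then (1:ℝ) else 0) | 𝓕 i]
          =ᵐ[μ] fun ω => p h * π j h i ω := by
      intro j
      have hgb : ∀ ω, |(if δ i ω = j then (1:ℝ) else 0)| ≤ 1 := by
        intro ω; split_ifs <;> norm_num
      have hgmeas : Measurable (fun ω => if δ i ω = j then (1:ℝ) else 0) :=
        Measurable.ite (hδmeas i (measurableSet_singleton j)) measurable_const measurable_const
      have hgint : Integrable (fun ω => if δ i ω = j then (1:ℝ) else 0) μ :=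
        intbdd 1 hgmeas.aestronglyMeasurable hgb
      have hfactor : (fun ω => if Z i ω = h ∧ δ i ω = j then (1:ℝ) else 0)
          = (fun ω => if Z i ω = h then (1:ℝ) else 0) * (fun ω => if δ i ω = j then (1:ℝ) else 0) := by
        funext ω
        by_cases h1 : Z i ω = h <;> by_cases h2 : δ i ω = j <;> simp [h1, h2]
      have hχg_int : Integrable ((fun ω => if Z i ω = h then (1:ℝ) else 0)
          * (fun ω => if δ i ω = j then (1:ℝ) else 0)) μ := by
        rw [← hfactor]
        refine intbdd 1 ?_ ?_
        · refine Measurable.aestronglyMeasurable (Measurable.ite ?_ measurable_const measurable_const)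
          exact ((hZmeas i) (measurableSet_singleton h)).inter ((hδmeas i) (measurableSet_singleton j))
        · intro ω; split_ifs <;> norm_num
      have hB : μ[(fun ω => if Z i ω = h then (1:ℝ) else 0)
            * (fun ω => if δ i ω = j then (1:ℝ) else 0) | 𝓕 i ⊔ MeasurableSpace.comap (Z i) ⊤]
          =ᵐ[μ] fun ω => π j h i ω * (if Z i ω = h then (1:ℝ) else 0) := by
        refine (condExp_mul_of_stronglyMeasurable_left hχm.stronglyMeasurable hχg_int hgint).trans ?_
        have hmul := (Filter.EventuallyEq.refl (ae μ)
          (fun ω => if Z i ω = h then (1:ℝ) else 0)).mul (halloc i j)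
        refine hmul.trans (Filter.Eventually.of_forall fun ω => ?_)
        by_cases hz : Z i ω = h
        · simp only [Pi.mul_apply, hz, if_pos rfl, if_true, one_mul, mul_one]
          have : ∀ h' : Fin H, (if (h:Fin H) = h' then (1:ℝ) else 0) * π j h' i ω
              = if h = h' then π j h' i ω else 0 := by
            intro h'; split_ifs <;> ring
          rw [Finset.sum_congr rfl (fun h' _ => this h'), Finset.sum_ite_eq]
          simp
        · simp [hz]
      have hA : μ[(fun ω => if Z i ω = h ∧ δ i ω = j then (1:ℝ) else 0) | 𝓕 i]
          =ᵐ[μ] μ[μ[(fun ω => if Z i ω = h then (1:ℝ) else 0)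
            * (fun ω => if δ i ω = j then (1:ℝ) else 0) | 𝓕 i ⊔ MeasurableSpace.comap (Z i) ⊤] | 𝓕 i] := by
        rw [hfactor]
        exact (condExp_condExp_of_le hmbig hbig).symm
      have hπm : StronglyMeasurable[𝓕 i] (π j h i) := (hπmeas j h i).stronglyMeasurable
      have hπχint : Integrable ((π j h i) * (fun ω => if Z i ω = h then (1:ℝ) else 0)) μ := by
        refine intbdd 1 (((hπmeas j h i).mono hm le_rfl).aestronglyMeasurable.mul
          (hχmc.mono hZle le_rfl).aestronglyMeasurable) fun ω => ?_
        have h1 := hπmem j h i ω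
        simp only [Pi.mul_apply, abs_mul]
        calc |π j h i ω| * |if Z i ω = h then (1:ℝ) else 0| ≤ 1 * 1 := by
              refine mul_le_mul ?_ (hχb ω) (abs_nonneg _) zero_le_one
              rw [abs_le]; exact ⟨by linarith [h1.1], h1.2⟩
          _ = 1 := one_mul 1
      have hC : μ[μ[(fun ω => if Z i ω = h then (1:ℝ) else 0)
            * (fun ω => if δ i ω = j then (1:ℝ) else 0) | 𝓕 i ⊔ MeasurableSpace.comap (Z i) ⊤] | 𝓕 i]
          =ᵐ[μ] μ[(π j h i) * (fun ω => if Z i ω = h then (1:ℝ) else 0) | 𝓕 i] :=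
        condExp_congr_ae hB
      have hD : μ[(π j h i) * (fun ω => if Z i ω = h then (1:ℝ) else 0) | 𝓕 i]
          =ᵐ[μ] (π j h i) * μ[(fun ω => if Z i ω = h then (1:ℝ) else 0) | 𝓕 i] :=
        condExp_mul_of_stronglyMeasurable_left hπm hπχint hχint
      have hE : μ[(fun ω => if Z i ω = h then (1:ℝ) else 0) | 𝓕 i] =ᵐ[μ] fun _ => p h := by
        have hind := condExp_indep_eq (μ := μ) hZle hm hχmc.stronglyMeasurable (hZindep i)
        refine hind.trans ?_
        have hval : ∫ ω, (if Z i ω = h then (1:ℝ) else 0) ∂μ = p h := by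
          have hi1 : (fun ω => if Z i ω = h then (1:ℝ) else 0)
              = Set.indicator {ω | Z i ω = h} (1 : Ω → ℝ) := by
            funext ω
            by_cases hz : Z i ω = h <;> simp [Set.indicator_apply, hz]
          rw [hi1]
          have hs' : MeasurableSet {ω | Z i ω = h} := (hZmeas i) (measurableSet_singleton h)
          have h1 := integral_indicator_one (μ := μ) hs'
          rw [measureReal_def, hZlaw i h, ENNReal.toReal_ofReal (hp h).le] at h1
          exact h1
        exact Filter.EventuallyEq.of_eq (funext fun _ => hval)
      refine hA.trans (hC.trans (hD.trans ?_))
      filter_upwards [hE] with ω hω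
      simp only [Pi.mul_apply]
      rw [hω]
      ring
    have hXc : μ[X i | 𝓕 i] =ᵐ[μ] c i := by
      have hint : ∀ j ∈ T, Integrable ((fun j => fun ω =>
          if Z i ω = h ∧ δ i ω = j then (1:ℝ) else 0) j) μ := by
        intro j _
        refine intbdd 1 ?_ ?_
        · refine Measurable.aestronglyMeasurable (Measurable.ite ?_ measurable_const measurable_const)
          exact ((hZmeas i) (measurableSet_singleton h)).inter ((hδmeas i) (measurableSet_singleton j))
        · intro ω
          show |if Z i ω = h ∧ δ i ω = j then (1:ℝ) else 0| ≤ 1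
          split_ifs <;> norm_num
      have hsum := condExp_finsetSum (m := 𝓕 i) (μ := μ) hint
      have hXeq : X i = ∑ j ∈ T, (fun ω => if Z i ω = h ∧ δ i ω = j then (1:ℝ) else 0) := by
        funext ω
        rw [Finset.sum_apply]
      rw [hXeq]
      refine hsum.trans ?_
      have hall : ∀ᵐ ω ∂μ, ∀ j ∈ T,
          (μ[(fun ω => if Z i ω = h ∧ δ i ω = j then (1:ℝ) else 0) | 𝓕 i]) ω
            = p h * π j h i ω := by
        rw [Filter.eventually_all_finset]
        intro j _
        exact hgj j
      filter_upwards [hall] with ω hω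
      rw [Finset.sum_apply]
      rw [Finset.sum_congr rfl (fun j hj => hω j hj)]
      simp only [hc]
      rw [Finset.mul_sum]
    have hccond : μ[c i | 𝓕 i] =ᵐ[μ] c i :=
      Filter.EventuallyEq.of_eq
        (condExp_of_stronglyMeasurable hm ((hcmeas i).stronglyMeasurable) (hcint i))
    have hsub' : μ[(fun ω => X i ω - c i ω) | 𝓕 i] =ᵐ[μ] μ[X i | 𝓕 i] - μ[c i | 𝓕 i] :=
      condExp_sub (hXint i) (hcint i) (𝓕 i)
    refine hsub'.trans ?_
    filter_upwards [hXc, hccond] with ω h1 h2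
    simp only [Pi.sub_apply, Pi.zero_apply]
    rw [h1, h2]
    ring
  
  have hslln := mart_slln μ 𝓕 hle hmono d hdm hdb hcond
  have hsum_id : ∀ n ω, ∑ i ∈ Finset.range n, X i ω = ∑ j ∈ T, N j h n ω := by
    intro n ω
    rw [Finset.sum_comm]
    exact Finset.sum_congr rfl fun j _ => (hN j h n ω).symm
  have hNdiv_le : ∀ n ω, (∑ j ∈ T, N j h n ω) / (n:ℝ) ≤ 1 := by
    intro n ω
    rw [← hsum_id]
    rcases Nat.eq_zero_or_pos n with h0 | hpos
    · subst h0; simp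
    · rw [div_le_one (by exact_mod_cast hpos)]
      calc ∑ i ∈ Finset.range n, X i ω ≤ ∑ i ∈ Finset.range n, 1 :=
            Finset.sum_le_sum fun i _ => (hXbound i ω).2
        _ = n := by simp
  have hNdiv_nonneg : ∀ n ω, 0 ≤ (∑ j ∈ T, N j h n ω) / (n:ℝ) := by
    intro n ω
    apply div_nonneg _ (Nat.cast_nonneg n)
    rw [← hsum_id]
    exact Finset.sum_nonneg fun i _ => (hXbound i ω).1
  constructor
  · -- Part 1
    refine measure_mono_null ?_ (ae_iff.mp hslln)
    intro ω hω
    obtain ⟨h1, h2⟩ := hω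
    intro htend
    apply h2
    show 0 < Filter.liminf (fun n => (∑ j ∈ T, N j h n ω) / (n:ℝ)) atTop
    have h1' : 0 < Filter.liminf (fun n => ∑ j ∈ T, π j h n ω) atTop := h1
    set L := Filter.liminf (fun n => ∑ j ∈ T, π j h n ω) atTop with hLdef
    have hcobdd : IsBoundedUnder (· ≥ ·) atTop (fun n => ∑ j ∈ T, π j h n ω) :=
      Filter.isBoundedUnder_of ⟨0, fun n => (hπsumT n ω).1⟩
    have hev : ∀ᶠ n in atTop, L/2 < ∑ j ∈ T, π j h n ω :=
      eventually_lt_of_lt_liminf (by linarith) hcobdd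
    obtain ⟨i₀, hi₀⟩ := Filter.eventually_atTop.mp hev
    have hρpos : 0 < p h * (L/2) := mul_pos (hp h) (by linarith)
    set ρ := p h * (L/2) with hρdef
    have hcsum : ∀ n, i₀ ≤ n → ((n:ℝ) - i₀) * ρ ≤ ∑ i ∈ Finset.range n, c i ω := by
      intro n hn
      calc ((n:ℝ) - i₀) * ρ = ∑ _i ∈ Finset.Ico i₀ n, ρ := by
            rw [Finset.sum_const, Nat.card_Ico, nsmul_eq_mul, Nat.cast_sub hn]
        _ ≤ ∑ i ∈ Finset.Ico i₀ n, c i ω := by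
            refine Finset.sum_le_sum fun i hi => ?_
            have hLi := hi₀ i (Finset.mem_Ico.mp hi).1
            simp only [hc]
            exact mul_le_mul_of_nonneg_left hLi.le (hp h).le
        _ ≤ ∑ i ∈ Finset.range n, c i ω := by
            rw [Finset.range_eq_Ico]
            exact Finset.sum_le_sum_of_subset_of_nonneg
              (Finset.Ico_subset_Ico (Nat.zero_le _) le_rfl)
              (fun i _ _ => (hcbound i ω).1)
    refine lt_of_lt_of_le (show (0:ℝ) < ρ/4 by linarith) ?_
    refine Filter.le_liminf_of_le ?_ ?_
    · exact isCoboundedUnder_ge_of_le atTop (x := 1) (fun n => hNdiv_le n ω)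
    · have hd4 : ∀ᶠ n : ℕ in atTop, -(ρ/4) < (∑ i ∈ Finset.range n, d i ω)/(n:ℝ) :=
        htend.eventually (eventually_gt_nhds (by linarith))
      filter_upwards [hd4, Filter.eventually_ge_atTop (2*i₀+1)] with n hdn hnn
      have hnpos : (0:ℝ) < n := by exact_mod_cast Nat.lt_of_lt_of_le (Nat.zero_lt_succ _) hnn
      have hsplit : (∑ j ∈ T, N j h n ω)/(n:ℝ)
          = (∑ i ∈ Finset.range n, c i ω)/(n:ℝ) + (∑ i ∈ Finset.range n, d i ω)/(n:ℝ) := by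
        rw [← add_div, ← hsum_id n ω]
        congr 1
        have : ∀ i, d i ω = X i ω - c i ω := fun i => rfl
        rw [Finset.sum_congr rfl (fun i _ => this i), Finset.sum_sub_distrib]
        ring
      rw [hsplit, ← add_div, le_div_iff₀ hnpos]
      have hc' := hcsum n (by omega)
      have hd' : -(ρ/4) * n < ∑ i ∈ Finset.range n, d i ω := by
        rw [← lt_div_iff₀ hnpos]
        exact hdn
      have hi₀n : (i₀:ℝ) ≤ ((n:ℝ) - 1)/2 := by
        have h2n : (2*i₀+1 : ℝ) ≤ n := by exact_mod_cast hnn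
        linarith
      have h5 : ρ * (i₀:ℝ) ≤ ρ * (((n:ℝ) - 1)/2) := mul_le_mul_of_nonneg_left hi₀n hρpos.le
      nlinarith [hc', hd', h5, hρpos, hnpos]
  · -- Part 2
    have hempty : {ω | 0 < Filter.liminf (fun n => (∑ j ∈ T, N j h n ω) / (n : ℝ)) atTop} \
        ⋃ j ∈ T, {ω | Tendsto (fun n => N j h n ω) atTop atTop} = ∅ := by
      rw [Set.diff_eq_empty]
      intro ω hω
      by_contra hnot
      simp only [Set.mem_iUnion, Set.mem_setOf_eq, not_exists] at hnot
      have hbdd : ∀ j, j ∈ T → ∃ l, ∀ n, N j h n ω ≤ l := by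
        intro j hj
        have hmonoN : Monotone (fun n => N j h n ω) := by
          intro a b hab
          simp only [hN]
          refine Finset.sum_le_sum_of_subset_of_nonneg (Finset.range_subset_range.mpr hab) ?_
          intro i _ _
          split_ifs <;> norm_num
        rcases tendsto_of_monotone hmonoN with hdiv | ⟨l, hl⟩
        · exact absurd hdiv (hnot j hj)
        · exact ⟨l, fun n => hmonoN.ge_of_tendsto hl n⟩
      choose l hl using hbdd
      set C : ℝ := ∑ j ∈ T.attach, l j.1 j.2 with hC
      have hCb : ∀ n, ∑ j ∈ T, N j h n ω ≤ C := by
        intro n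
        rw [← Finset.sum_attach T (fun j => N j h n ω)]
        exact Finset.sum_le_sum fun j _ => hl j.1 j.2 n
      have htend0 : Tendsto (fun n => (∑ j ∈ T, N j h n ω)/(n:ℝ)) atTop (𝓝 0) := by
        refine squeeze_zero (fun n => hNdiv_nonneg n ω) (fun n => ?_)
          (tendsto_const_div_atTop_nhds_zero_nat C)
        rcases Nat.eq_zero_or_pos n with h0 | hpos
        · subst h0; simp
        · have hnpos : (0:ℝ) < n := by exact_mod_cast hpos
          rw [div_le_div_iff₀ hnpos hnpos]
          have := hCb n
          nlinarith [hnpos]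
      have : Filter.liminf (fun n => (∑ j ∈ T, N j h n ω)/(n:ℝ)) atTop = 0 :=
        htend0.liminf_eq
      rw [Set.mem_setOf_eq, this] at hω
      exact lt_irrefl 0 hω
    rw [hempty]
    exact measure_empty
end

section
/- Under the Interacting Urns Design with the asymptotically vanishing borrowing update mechanism, for every fixed stratum h ∈ {1,…,H} and treatment j ∈ {1,…,J}: if N_{j,h,n} → ∞ almost surely, then P_{j,h,n} → θ_{j,h} almost surely as n → ∞. -/
open MeasureTheory ProbabilityTheory Filter
open scoped ENNReal NNReal

section aux
open Filter Finset

/-- telescoping bound -/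
lemma iud_tele (w : ℕ → ℝ) (hw : ∀ i, w i = 0 ∨ w i = 1) (n : ℕ) :
    ∑ i ∈ Finset.range n, w i / ((∑ k ∈ Finset.range i, w k) + 1) ^ 2 ≤ 2 := by
  have hNnn : ∀ m, 0 ≤ ∑ k ∈ Finset.range m, w k := by
    intro m
    refine Finset.sum_nonneg fun k _ => ?_
    rcases hw k with h | h <;> simp [h]
  have key : ∀ i, w i / ((∑ k ∈ Finset.range i, w k) + 1) ^ 2 ≤
      2 * (1 / ((∑ k ∈ Finset.range i, w k) + 1) - 1 / ((∑ k ∈ Finset.range (i+1), w k) + 1)) := by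
    intro i
    set Ni := ∑ k ∈ Finset.range i, w k with hNi
    have hNi0 : 0 ≤ Ni := hNnn i
    have hsucc : ∑ k ∈ Finset.range (i+1), w k = Ni + w i := by
      rw [Finset.sum_range_succ]
    rcases hw i with h | h
    · simp [h, hsucc]
    · rw [h, hsucc, h]
      have h1 : (0:ℝ) < Ni + 1 := by linarith
      have h2 : (0:ℝ) < Ni + 1 + 1 := by linarith
      rw [div_sub_div _ _ (ne_of_gt h1) (ne_of_gt h2)]
      have h3 : (1:ℝ) * (Ni + 1 + 1) - (Ni + 1) * 1 = 1 := by ring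
      rw [h3]
      have h4 : 2 * ((1:ℝ) / ((Ni + 1) * (Ni + 1 + 1))) = 2 / ((Ni + 1) * (Ni + 1 + 1)) := by ring
      rw [h4, div_le_div_iff₀ (by positivity) (by positivity)]
      nlinarith [sq_nonneg (Ni + 1)]
  calc ∑ i ∈ Finset.range n, w i / ((∑ k ∈ Finset.range i, w k) + 1) ^ 2
      ≤ ∑ i ∈ Finset.range n, 2 * (1 / ((∑ k ∈ Finset.range i, w k) + 1)
          - 1 / ((∑ k ∈ Finset.range (i+1), w k) + 1)) :=
        Finset.sum_le_sum fun i _ => key i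
    _ = 2 * (1 / ((∑ k ∈ Finset.range 0, w k) + 1) - 1 / ((∑ k ∈ Finset.range n, w k) + 1)) := by
        rw [← Finset.mul_sum, Finset.sum_range_sub' (fun m => 1 / ((∑ k ∈ Finset.range m, w k) + 1))]
    _ ≤ 2 := by
        have := hNnn n
        have h1 : (0:ℝ) < (∑ k ∈ Finset.range n, w k) + 1 := by linarith
        have : 0 ≤ 1 / ((∑ k ∈ Finset.range n, w k) + 1) := by positivity
        simp only [Finset.range_zero, Finset.sum_empty]
        norm_num
        linarith

/-- Abel summation identity -/
lemma iud_abel (w g : ℕ → ℝ) (n : ℕ) :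
    ∑ i ∈ Finset.range n, (∑ k ∈ Finset.range (i+1), w k) * g i
      = (∑ k ∈ Finset.range n, w k) * (∑ i ∈ Finset.range n, g i)
        - ∑ i ∈ Finset.range n, w i * (∑ k ∈ Finset.range i, g k) := by
  induction n with
  | zero => simp
  | succ n ih =>
    rw [Finset.sum_range_succ, ih, Finset.sum_range_succ (fun i => w i * _),
      Finset.sum_range_succ w, Finset.sum_range_succ g]
    ring

/-- weighted cesaro -/
lemma iud_cesaro (w d : ℕ → ℝ) (hw0 : ∀ i, 0 ≤ w i) (hw1 : ∀ i, w i ≤ 1)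
    (hN : Tendsto (fun n => ∑ i ∈ Finset.range n, w i) atTop atTop)
    (hd : Tendsto d atTop (nhds 0)) :
    Tendsto (fun n => (∑ i ∈ Finset.range n, w i * d i) / (∑ i ∈ Finset.range n, w i))
      atTop (nhds 0) := by
  rw [Metric.tendsto_atTop]
  intro ε hε
  have hε4 : 0 < ε / 4 := by linarith
  obtain ⟨I, hI⟩ := (Metric.tendsto_atTop.mp hd (ε/4) hε4)
  set C := ∑ i ∈ Finset.range I, |d i| with hC
  have hC0 : 0 ≤ C := Finset.sum_nonneg fun i _ => abs_nonneg _
  obtain ⟨n₀, hn₀⟩ := Filter.eventually_atTop.mp (hN.eventually_ge_atTop (max 1 (C / (ε/4))))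
  refine ⟨max n₀ I, fun n hn => ?_⟩
  have hn1 : n₀ ≤ n := le_trans (le_max_left _ _) hn
  have hnI : I ≤ n := le_trans (le_max_right _ _) hn
  set W := ∑ i ∈ Finset.range n, w i with hW
  have hWge : max 1 (C / (ε/4)) ≤ W := hn₀ n hn1
  have hW1 : (1:ℝ) ≤ W := le_trans (le_max_left _ _) hWge
  have hWpos : (0:ℝ) < W := by linarith
  rw [Real.dist_eq, sub_zero, abs_div, abs_of_pos hWpos, div_lt_iff₀ hWpos]
  have hsplit : ∑ i ∈ Finset.range n, w i * d i
      = (∑ i ∈ Finset.range I, w i * d i) + ∑ i ∈ Finset.Ico I n, w i * d i := by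
    rw [Finset.sum_range_add_sum_Ico _ hnI]
  have habs : |∑ i ∈ Finset.range n, w i * d i| ≤ C + (ε/4) * W := by
    rw [hsplit]
    refine le_trans (abs_add_le _ _) ?_
    gcongr
    · refine le_trans (Finset.abs_sum_le_sum_abs _ _) ?_
      refine Finset.sum_le_sum fun i _ => ?_
      rw [abs_mul]
      calc |w i| * |d i| ≤ 1 * |d i| := by
            gcongr; rw [abs_of_nonneg (hw0 i)]; exact hw1 i
        _ = |d i| := one_mul _
    · refine le_trans (Finset.abs_sum_le_sum_abs _ _) ?_
      calc ∑ i ∈ Finset.Ico I n, |w i * d i|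
          ≤ ∑ i ∈ Finset.Ico I n, w i * (ε/4) := by
            refine Finset.sum_le_sum fun i hi => ?_
            rw [abs_mul, abs_of_nonneg (hw0 i)]
            have := hI i (Finset.mem_Ico.mp hi).1
            rw [Real.dist_eq, sub_zero] at this
            exact mul_le_mul_of_nonneg_left this.le (hw0 i)
        _ = (∑ i ∈ Finset.Ico I n, w i) * (ε/4) := by rw [Finset.sum_mul]
        _ ≤ W * (ε/4) := by
            have : ∑ i ∈ Finset.Ico I n, w i ≤ W := by
              rw [hW, ← Finset.sum_range_add_sum_Ico _ hnI]
              have : 0 ≤ ∑ i ∈ Finset.range I, w i := Finset.sum_nonneg fun i _ => hw0 i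
              linarith
            exact mul_le_mul_of_nonneg_right this hε4.le
        _ = (ε/4) * W := mul_comm _ _
  have hCW : C ≤ (ε/4) * W := by
    have := le_trans (le_max_right 1 (C/(ε/4))) hWge
    rw [div_le_iff₀ hε4] at this
    linarith [this]
  calc |∑ i ∈ Finset.range n, w i * d i| ≤ C + (ε/4)*W := habs
    _ ≤ (ε/4)*W + (ε/4)*W := by linarith
    _ < ε * W := by nlinarith

/-- Kronecker-type lemma -/
lemma iud_kron (w g : ℕ → ℝ) (hw : ∀ i, w i = 0 ∨ w i = 1) (hg0 : ∀ i, w i = 0 → g i = 0)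
    {l : ℝ} (hL : Tendsto (fun n => ∑ i ∈ Finset.range n, g i) atTop (nhds l))
    (hN : Tendsto (fun n => ∑ i ∈ Finset.range n, w i) atTop atTop) :
    Tendsto (fun n => (∑ i ∈ Finset.range n, ((∑ k ∈ Finset.range i, w k) + 1) * g i)
        / (∑ i ∈ Finset.range n, w i)) atTop (nhds 0) := by
  set W : ℕ → ℝ := fun n => ∑ i ∈ Finset.range n, w i with hWdef
  set L : ℕ → ℝ := fun n => ∑ i ∈ Finset.range n, g i with hLdef
  have hnum : ∀ n, ∑ i ∈ Finset.range n, ((∑ k ∈ Finset.range i, w k) + 1) * g i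
      = W n * L n - ∑ i ∈ Finset.range n, w i * L i := by
    intro n
    rw [← iud_abel w g n]
    refine Finset.sum_congr rfl fun i _ => ?_
    rcases hw i with h | h
    · rw [hg0 i h]; ring
    · rw [Finset.sum_range_succ, h]
  have hWpos : ∀ᶠ n in atTop, 0 < W n := hN.eventually_gt_atTop 0
  have hwd : ∀ i, w i * L i = w i * l + w i * (L i - l) := fun i => by ring
  -- main rewrite: for W n > 0,
  have hmain : ∀ᶠ n in atTop,
      (∑ i ∈ Finset.range n, ((∑ k ∈ Finset.range i, w k) + 1) * g i) / W n
        = (L n - l) - (∑ i ∈ Finset.range n, w i * (L i - l)) / W n := by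
    filter_upwards [hWpos] with n hWn
    rw [hnum n]
    have : ∑ i ∈ Finset.range n, w i * L i
        = W n * l + ∑ i ∈ Finset.range n, w i * (L i - l) := by
      rw [hWdef]
      simp only [hwd]
      rw [Finset.sum_add_distrib, ← Finset.sum_mul]
    rw [this]
    field_simp
    ring
  have hterm1 : Tendsto (fun n => L n - l) atTop (nhds 0) := by
    simpa using hL.sub (tendsto_const_nhds (x := l))
  have hterm2 : Tendsto (fun n => (∑ i ∈ Finset.range n, w i * (L i - l)) / W n)
      atTop (nhds 0) := by
    refine iud_cesaro w (fun i => L i - l) (fun i => ?_) (fun i => ?_) hN hterm1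
    · rcases hw i with h | h <;> simp [h]
    · rcases hw i with h | h <;> simp [h]
  have := hterm1.sub hterm2
  rw [sub_zero] at this
  exact this.congr' (hmain.mono fun n hn => hn.symm)

end aux

theorem stmt9
    {Ω : Type*} [MeasurableSpace Ω] (μ : Measure Ω) [IsProbabilityMeasure μ]
    (H J : ℕ) (hH : 1 ≤ H) (hJ : 2 ≤ J)
    (Z : ℕ → Ω → Fin H) (δ : ℕ → Ω → Fin J) (Y : ℕ → Ω → ℝ)
    (p : Fin H → ℝ)
    (hZmeas : ∀ i, Measurable (Z i)) (hδmeas : ∀ i, Measurable (δ i))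
    (hYmeas : ∀ i, Measurable (Y i))
    (hY01 : ∀ i ω, Y i ω = 0 ∨ Y i ω = 1)
    (hp : ∀ h, 0 < p h)
    (𝓕 : ℕ → MeasurableSpace Ω)
    (h𝓕 : ∀ n, 𝓕 n = ⨆ i ∈ Finset.range n,
      (MeasurableSpace.comap (Z i) ⊤ ⊔ MeasurableSpace.comap (δ i) ⊤ ⊔ MeasurableSpace.comap (Y i) ⊤))
    (hZlaw : ∀ i h, μ {ω | Z i ω = h} = ENNReal.ofReal (p h))
    (hZindep : ∀ i, Indep (MeasurableSpace.comap (Z i) ⊤) (𝓕 i) μ)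
    (θ : Fin J → Fin H → ℝ)
    (hθmem : ∀ j h, θ j h ∈ Set.Ioo (0:ℝ) 1)
    (hYcond : ∀ i, μ[Y i | 𝓕 i ⊔ MeasurableSpace.comap (fun ω => (Z i ω, δ i ω)) ⊤]
        =ᵐ[μ] fun ω => θ (δ i ω) (Z i ω))
    (S N : Fin J → Fin H → ℕ → Ω → ℝ)
    (hS : ∀ j h n ω, S j h n ω = ∑ i ∈ Finset.range n, if Z i ω = h ∧ δ i ω = j then Y i ω else 0)
    (hN : ∀ j h n ω, N j h n ω = ∑ i ∈ Finset.range n, if Z i ω = h ∧ δ i ω = j then 1 else 0)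
    (θhat : Fin J → Fin H → ℕ → Ω → ℝ)
    (hθhat : ∀ j h n ω, θhat j h n ω = S j h n ω / N j h n ω)
    (ψ : ℝ → ℝ) (ψmax : ℝ)
    (hψcont : ContinuousOn ψ (Set.Ici 0)) (hψmono : MonotoneOn ψ (Set.Ici 0))
    (hψ0 : ψ 0 = 0) (hψpos : ∀ x : ℝ, 0 < x → 0 < ψ x ∧ ψ x ≤ ψmax)
    (P : Fin J → Fin H → ℕ → Ω → ℝ)
    (hP : ∀ j h n ω,
      P j h n ω =
        if N j h n ω + ψ (∑ k ∈ Finset.univ.erase h, N j k n ω) = 0 then 1/2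
        else (S j h n ω +
            ((∑ k ∈ Finset.univ.erase h, S j k n ω) / (∑ k ∈ Finset.univ.erase h, N j k n ω)) *
              ψ (∑ k ∈ Finset.univ.erase h, N j k n ω)) /
          (N j h n ω + ψ (∑ k ∈ Finset.univ.erase h, N j k n ω)))
    :
    ∀ (j : Fin J) (h : Fin H),
      (∀ᵐ ω ∂μ, Tendsto (fun n => N j h n ω) atTop atTop) →
      ∀ᵐ ω ∂μ, Tendsto (fun n => P j h n ω) atTop (nhds (θ j h)) := by
  classical
  intro j h hNae
  let m0 : MeasurableSpace Ω := ‹MeasurableSpace Ω›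
  -- indicator and martingale increments
  set ind : ℕ → Ω → ℝ := fun i ω => if Z i ω = h ∧ δ i ω = j then 1 else 0 with hind_def
  set X : ℕ → Ω → ℝ := fun i ω => ind i ω * (Y i ω - θ j h) with hX_def
  set G : ℕ → Ω → ℝ := fun i ω => (N j h i ω + 1)⁻¹ * X i ω with hG_def
  set L : ℕ → Ω → ℝ := fun n ω => ∑ i ∈ Finset.range n, G i ω with hL_def
  -- σ-algebra comparisons
  have hcomapZ : ∀ i, MeasurableSpace.comap (Z i) ⊤ ≤ m0 := by
    intro i
    exact measurable_iff_comap_le.mp (hZmeas i)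
  have hcomapδ : ∀ i, MeasurableSpace.comap (δ i) ⊤ ≤ m0 := by
    intro i
    exact measurable_iff_comap_le.mp (hδmeas i)
  have hcomapY : ∀ i, MeasurableSpace.comap (Y i) ⊤ ≤ m0 := by
    intro i
    rintro s ⟨A, -, rfl⟩
    have hAiff : Y i ⁻¹' A = Y i ⁻¹' (A ∩ {0, 1}) := by
      ext ω
      simp only [Set.mem_preimage, Set.mem_inter_iff, Set.mem_insert_iff, Set.mem_singleton_iff]
      exact ⟨fun hA => ⟨hA, hY01 i ω⟩, fun hA => hA.1⟩
    rw [hAiff]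
    have hfin : (A ∩ {0, 1} : Set ℝ).Finite :=
      Set.Finite.subset ((Set.finite_singleton 1).insert 0) Set.inter_subset_right
    exact hYmeas i hfin.measurableSet
  have hcomapPair : ∀ i, MeasurableSpace.comap (fun ω => (Z i ω, δ i ω)) ⊤ ≤ m0 := by
    intro i
    rintro s ⟨A, -, rfl⟩
    exact ((hZmeas i).prodMk (hδmeas i)) A.to_countable.measurableSet
  have hle : ∀ n, 𝓕 n ≤ m0 := by
    intro n
    rw [h𝓕 n]
    exact iSup₂_le fun i _ => sup_le (sup_le (hcomapZ i) (hcomapδ i)) (hcomapY i)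
  have hmono : Monotone 𝓕 := by
    intro a b hab
    rw [h𝓕 a, h𝓕 b]
    exact biSup_mono fun i hi => Finset.mem_range.mpr (lt_of_lt_of_le (Finset.mem_range.mp hi) hab)
  set ℱ : Filtration ℕ m0 := ⟨𝓕, hmono, hle⟩ with hℱ_def
  -- measurability wrt the filtration
  have hcomapZ_le : ∀ i n, i < n → MeasurableSpace.comap (Z i) ⊤ ≤ 𝓕 n := by
    intro i n hin
    rw [h𝓕 n]
    exact le_trans (le_sup_left.trans le_sup_left)
      (le_iSup₂ (f := fun i (_ : i ∈ Finset.range n) => MeasurableSpace.comap (Z i) ⊤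
        ⊔ MeasurableSpace.comap (δ i) ⊤ ⊔ MeasurableSpace.comap (Y i) ⊤)
        i (Finset.mem_range.mpr hin))
  have hcomapδ_le : ∀ i n, i < n → MeasurableSpace.comap (δ i) ⊤ ≤ 𝓕 n := by
    intro i n hin
    rw [h𝓕 n]
    exact le_trans (le_sup_right.trans le_sup_left)
      (le_iSup₂ (f := fun i (_ : i ∈ Finset.range n) => MeasurableSpace.comap (Z i) ⊤
        ⊔ MeasurableSpace.comap (δ i) ⊤ ⊔ MeasurableSpace.comap (Y i) ⊤)
        i (Finset.mem_range.mpr hin))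
  have hcomapY_le : ∀ i n, i < n → MeasurableSpace.comap (Y i) ⊤ ≤ 𝓕 n := by
    intro i n hin
    rw [h𝓕 n]
    exact le_trans le_sup_right
      (le_iSup₂ (f := fun i (_ : i ∈ Finset.range n) => MeasurableSpace.comap (Z i) ⊤
        ⊔ MeasurableSpace.comap (δ i) ⊤ ⊔ MeasurableSpace.comap (Y i) ⊤)
        i (Finset.mem_range.mpr hin))
  have hZm : ∀ i n, i < n → Measurable[𝓕 n] (Z i) := by
    intro i n hin
    exact measurable_iff_comap_le.mpr ((MeasurableSpace.comap_mono le_top).trans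
      (hcomapZ_le i n hin))
  have hδm : ∀ i n, i < n → Measurable[𝓕 n] (δ i) := by
    intro i n hin
    exact measurable_iff_comap_le.mpr ((MeasurableSpace.comap_mono le_top).trans
      (hcomapδ_le i n hin))
  have hYm : ∀ i n, i < n → Measurable[𝓕 n] (Y i) := by
    intro i n hin
    exact measurable_iff_comap_le.mpr ((MeasurableSpace.comap_mono le_top).trans
      (hcomapY_le i n hin))
  have hEm : ∀ i n, i < n → MeasurableSet[𝓕 n] {ω | Z i ω = h ∧ δ i ω = j} := by
    intro i n hin
    have h1 : MeasurableSet[𝓕 n] {ω | Z i ω = h} :=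
      hZm i n hin (measurableSet_singleton h)
    have h2 : MeasurableSet[𝓕 n] {ω | δ i ω = j} :=
      hδm i n hin (measurableSet_singleton j)
    exact h1.inter h2
  have hind_m : ∀ i n, i < n → Measurable[𝓕 n] (ind i) := by
    intro i n hin
    exact Measurable.ite (hEm i n hin) measurable_const measurable_const
  have hX_m : ∀ i n, i < n → Measurable[𝓕 n] (X i) := by
    intro i n hin
    exact (hind_m i n hin).mul ((hYm i n hin).sub measurable_const)
  have hN_m : ∀ n m, n ≤ m → Measurable[𝓕 m] (N j h n) := by
    intro n m hnm
    have : N j h n = fun ω => ∑ i ∈ Finset.range n, ind i ω := by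
      funext ω; rw [hN]
    rw [this]
    exact Finset.measurable_sum _ fun i hi =>
      hind_m i m (lt_of_lt_of_le (Finset.mem_range.mp hi) hnm)
  have hG_m : ∀ i n, i < n → Measurable[𝓕 n] (G i) := by
    intro i n hin
    exact (((hN_m i n hin.le).add measurable_const).inv).mul (hX_m i n hin)
  -- bounds
  have hind01 : ∀ i ω, ind i ω = 0 ∨ ind i ω = 1 := by
    intro i ω
    by_cases hc : Z i ω = h ∧ δ i ω = j <;> simp [hind_def, hc]
  have hNnonneg' : ∀ (k : Fin H) n ω, 0 ≤ N j k n ω := by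
    intro k n ω
    rw [hN]
    refine Finset.sum_nonneg fun i _ => ?_
    split <;> norm_num
  have hNnonneg : ∀ n ω, 0 ≤ N j h n ω := hNnonneg' h
  have hSnonneg : ∀ (k : Fin H) n ω, 0 ≤ S j k n ω := by
    intro k n ω
    rw [hS]
    refine Finset.sum_nonneg fun i _ => ?_
    split
    · rcases hY01 i ω with hy | hy <;> rw [hy] <;> norm_num
    · exact le_rfl
  have hSleN : ∀ (k : Fin H) n ω, S j k n ω ≤ N j k n ω := by
    intro k n ω
    rw [hS, hN]
    refine Finset.sum_le_sum fun i _ => ?_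
    split
    · rcases hY01 i ω with hy | hy <;> rw [hy] <;> norm_num
    · exact le_rfl
  have hYabs : ∀ i ω, |Y i ω - θ j h| ≤ 1 := by
    intro i ω
    obtain ⟨h0, h1⟩ := hθmem j h
    rcases hY01 i ω with hy | hy <;> rw [hy, abs_le] <;> constructor <;> linarith
  have hXabs : ∀ i ω, |X i ω| ≤ 1 := by
    intro i ω
    rw [hX_def]
    simp only
    rw [abs_mul]
    rcases hind01 i ω with hi | hi <;> rw [hi]
    · simp
    · rw [abs_one, one_mul]; exact hYabs i ω
  have hGabs : ∀ i ω, |G i ω| ≤ 1 := by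
    intro i ω
    rw [hG_def]
    simp only
    rw [abs_mul]
    have h1 : (0:ℝ) < N j h i ω + 1 := by linarith [hNnonneg i ω]
    have h2 : |(N j h i ω + 1)⁻¹| ≤ 1 := by
      rw [abs_inv, abs_of_pos h1]
      rw [inv_le_one_iff₀]
      right; linarith [hNnonneg i ω]
    calc |(N j h i ω + 1)⁻¹| * |X i ω| ≤ 1 * 1 :=
          mul_le_mul h2 (hXabs i ω) (abs_nonneg _) zero_le_one
      _ = 1 := one_mul 1
  -- integrability
  have hint : ∀ {f : Ω → ℝ}, Measurable f → (∀ ω, |f ω| ≤ 1) → Integrable f μ := by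
    intro f hf hb
    exact (integrable_const (1:ℝ)).mono' hf.aestronglyMeasurable (Filter.Eventually.of_forall hb)
  have hX_int : ∀ i, Integrable (X i) μ := fun i =>
    hint ((hX_m i (i+1) (Nat.lt_succ_self i)).mono (hle (i+1)) le_rfl) (hXabs i)
  have hG_int : ∀ i, Integrable (G i) μ := fun i =>
    hint ((hG_m i (i+1) (Nat.lt_succ_self i)).mono (hle (i+1)) le_rfl) (hGabs i)
  have hL_int : ∀ n, Integrable (L n) μ := by
    intro n
    rw [hL_def]
    exact integrable_finset_sum _ fun i _ => hG_int i
  -- conditional expectation of X vanishes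
  have hXcond : ∀ i, μ[X i | 𝓕 i] =ᵐ[μ] 0 := by
    intro i
    set 𝓖 : MeasurableSpace Ω := 𝓕 i ⊔ MeasurableSpace.comap (fun ω => (Z i ω, δ i ω)) ⊤
      with h𝓖
    have h𝓖le : 𝓖 ≤ m0 := sup_le (hle i) (hcomapPair i)
    have hEmG : MeasurableSet[𝓖] {ω | Z i ω = h ∧ δ i ω = j} := by
      have hmem : MeasurableSet[MeasurableSpace.comap (fun ω => (Z i ω, δ i ω)) ⊤]
          {ω | Z i ω = h ∧ δ i ω = j} := by
        refine ⟨{(h, j)}, trivial, ?_⟩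
        ext ω
        simp [Prod.ext_iff]
      exact (le_sup_right : MeasurableSpace.comap (fun ω => (Z i ω, δ i ω)) ⊤ ≤ 𝓖) _ hmem
    have hindG : StronglyMeasurable[𝓖] (ind i) :=
      (Measurable.ite hEmG measurable_const measurable_const).stronglyMeasurable
    have hD_int : Integrable (fun ω => Y i ω - θ j h) μ := by
      refine Integrable.sub ?_ (integrable_const _)
      refine hint (hYmeas i) ?_
      intro ω; rcases hY01 i ω with hy | hy <;> rw [hy] <;> norm_num
    have hprod : X i = ind i * (fun ω => Y i ω - θ j h) := rfl
    have step1 : μ[X i | 𝓖] =ᵐ[μ] ind i * μ[(fun ω => Y i ω - θ j h) | 𝓖] := by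
      rw [hprod]
      exact condExp_mul_of_stronglyMeasurable_left hindG (hprod ▸ hX_int i) hD_int
    have step2 : μ[(fun ω => Y i ω - θ j h) | 𝓖] =ᵐ[μ]
        fun ω => θ (δ i ω) (Z i ω) - θ j h := by
      have hsub : (fun ω => Y i ω - θ j h) = Y i - (fun _ => θ j h) := rfl
      rw [hsub]
      refine (condExp_sub ?_ (integrable_const _) 𝓖).trans ?_
      · refine hint (hYmeas i) ?_
        intro ω; rcases hY01 i ω with hy | hy <;> rw [hy] <;> norm_num
      have hc : μ[(fun _ => θ j h : Ω → ℝ) | 𝓖] = fun _ => θ j h := condExp_const h𝓖le _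
      filter_upwards [hYcond i] with ω hω
      simp only [Pi.sub_apply]
      rw [hc]
      simp only [h𝓖] at hω ⊢
      rw [hω]
    have hzero : (fun ω => ind i ω * (θ (δ i ω) (Z i ω) - θ j h)) = (0 : Ω → ℝ) := by
      funext ω
      by_cases hc : Z i ω = h ∧ δ i ω = j
      · simp [hind_def, hc, hc.1, hc.2]
      · simp [hind_def, hc]
    have hXG : μ[X i | 𝓖] =ᵐ[μ] 0 := by
      refine step1.trans ?_
      have : ind i * μ[(fun ω => Y i ω - θ j h) | 𝓖] =ᵐ[μ]
          fun ω => ind i ω * (θ (δ i ω) (Z i ω) - θ j h) := by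
        filter_upwards [step2] with ω hω
        simp only [Pi.mul_apply]
        rw [hω]
      exact this.trans (by rw [hzero])
    have htower : μ[X i | 𝓕 i] =ᵐ[μ] μ[μ[X i | 𝓖] | 𝓕 i] :=
      (condExp_condExp_of_le le_sup_left h𝓖le).symm
    refine htower.trans ?_
    calc μ[μ[X i | 𝓖] | 𝓕 i] =ᵐ[μ] μ[(0 : Ω → ℝ) | 𝓕 i] := condExp_congr_ae hXG
      _ = 0 := condExp_zero
  -- conditional expectation of G vanishes
  have hGcond : ∀ i, μ[G i | 𝓕 i] =ᵐ[μ] 0 := by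
    intro i
    have hc : StronglyMeasurable[𝓕 i] (fun ω => (N j h i ω + 1)⁻¹) :=
      (((hN_m i i le_rfl).add measurable_const).inv).stronglyMeasurable
    have hprod : G i = (fun ω => (N j h i ω + 1)⁻¹) * X i := rfl
    have := condExp_mul_of_stronglyMeasurable_left hc (hprod ▸ hG_int i) (hX_int i)
    rw [← hprod] at this
    refine this.trans ?_
    filter_upwards [hXcond i] with ω hω
    simp only [Pi.mul_apply, hω, Pi.zero_apply, mul_zero]
  -- martingale
  have hadp : StronglyAdapted ℱ L := by
    intro n
    refine Measurable.stronglyMeasurable ?_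
    rw [hL_def]
    exact Finset.measurable_sum _ fun i hi => hG_m i n (Finset.mem_range.mp hi)
  have hmart : Martingale L ℱ μ := by
    refine martingale_of_condExp_sub_eq_zero_nat hadp hL_int ?_
    intro i
    have hdiff : L (i+1) - L i = G i := by
      funext ω
      simp only [Pi.sub_apply, hL_def, Finset.sum_range_succ]
      ring
    rw [hdiff]
    exact hGcond i
  -- L² bound
  have hGG_int : ∀ i k, Integrable (fun ω => G i ω * G k ω) μ := by
    intro i k
    refine hint ?_ ?_
    · exact (((hG_m i (i+1) (Nat.lt_succ_self i)).mono (hle (i+1)) le_rfl)).mul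
        (((hG_m k (k+1) (Nat.lt_succ_self k)).mono (hle (k+1)) le_rfl))
    · intro ω
      rw [abs_mul]
      calc |G i ω| * |G k ω| ≤ 1 * 1 :=
            mul_le_mul (hGabs i ω) (hGabs k ω) (abs_nonneg _) zero_le_one
        _ = 1 := one_mul 1
  have horth : ∀ i k, i < k → ∫ ω, G i ω * G k ω ∂μ = 0 := by
    intro i k hik
    have hGiSM : StronglyMeasurable[𝓕 k] (G i) := (hG_m i k hik).stronglyMeasurable
    have hpull : μ[(fun ω => G i ω * G k ω) | 𝓕 k] =ᵐ[μ] G i * μ[G k | 𝓕 k] := by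
      have hprod : (fun ω => G i ω * G k ω) = G i * G k := rfl
      rw [hprod]
      exact condExp_mul_of_stronglyMeasurable_left hGiSM (hGG_int i k) (hG_int k)
    have hzero : μ[(fun ω => G i ω * G k ω) | 𝓕 k] =ᵐ[μ] 0 := by
      refine hpull.trans ?_
      filter_upwards [hGcond k] with ω hω
      simp only [Pi.mul_apply, hω, Pi.zero_apply, mul_zero]
    calc ∫ ω, G i ω * G k ω ∂μ = ∫ ω, (μ[(fun ω => G i ω * G k ω) | 𝓕 k]) ω ∂μ :=
          (integral_condExp (hle k)).symm
      _ = ∫ ω, (0:ℝ) ∂μ := integral_congr_ae hzero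
      _ = 0 := integral_zero _ _
  have hsq_bound : ∀ n ω, ∑ i ∈ Finset.range n, (G i ω)^2 ≤ 2 := by
    intro n ω
    have hterm : ∀ i, (G i ω)^2 ≤ ind i ω / ((∑ k ∈ Finset.range i, ind k ω) + 1)^2 := by
      intro i
      have hNi : N j h i ω = ∑ k ∈ Finset.range i, ind k ω := by rw [hN]
      have h1 : (0:ℝ) < N j h i ω + 1 := by linarith [hNnonneg i ω]
      have hX2 : (X i ω)^2 ≤ ind i ω := by
        rw [hX_def]
        simp only
        rcases hind01 i ω with hi | hi <;> rw [hi]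
        · ring_nf; norm_num
        · rw [one_mul]
          have := hYabs i ω
          nlinarith [abs_nonneg (Y i ω - θ j h), sq_abs (Y i ω - θ j h)]
      have h2 : (0:ℝ) < (N j h i ω + 1)^2 := pow_pos h1 2
      rw [← hNi]
      calc (G i ω)^2 = (X i ω)^2 / (N j h i ω + 1)^2 := by
            rw [hG_def]; simp only; rw [mul_pow, inv_pow, ← div_eq_inv_mul]
        _ ≤ ind i ω / (N j h i ω + 1)^2 := by
            rw [div_le_div_iff₀ h2 h2]
            nlinarith [mul_le_mul_of_nonneg_right hX2 h2.le]
    calc ∑ i ∈ Finset.range n, (G i ω)^2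
        ≤ ∑ i ∈ Finset.range n, ind i ω / ((∑ k ∈ Finset.range i, ind k ω) + 1)^2 :=
          Finset.sum_le_sum fun i _ => hterm i
      _ ≤ 2 := iud_tele (fun i => ind i ω) (fun i => hind01 i ω) n
  have hL2 : ∀ n, ∫ ω, (L n ω)^2 ∂μ ≤ 2 := by
    intro n
    have hexp : ∀ ω, (L n ω)^2 = ∑ i ∈ Finset.range n, ∑ k ∈ Finset.range n, G i ω * G k ω := by
      intro ω
      rw [hL_def]
      simp only
      rw [sq, Finset.sum_mul_sum]
    have hint1 : ∫ ω, (L n ω)^2 ∂μ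
        = ∑ i ∈ Finset.range n, ∑ k ∈ Finset.range n, ∫ ω, G i ω * G k ω ∂μ := by
      rw [integral_congr_ae (Filter.Eventually.of_forall hexp)]
      rw [integral_finset_sum _ fun i _ => integrable_finset_sum _ fun k _ => hGG_int i k]
      exact Finset.sum_congr rfl fun i _ => integral_finset_sum _ fun k _ => hGG_int i k
    have hdiag : ∀ i ∈ Finset.range n,
        ∑ k ∈ Finset.range n, ∫ ω, G i ω * G k ω ∂μ = ∫ ω, (G i ω)^2 ∂μ := by
      intro i hi
      rw [Finset.sum_eq_single i]
      · exact integral_congr_ae (Filter.Eventually.of_forall fun ω => (sq (G i ω)).symm)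
      · intro k _ hki
        rcases lt_or_gt_of_ne (Ne.symm hki) with hik | hik
        · exact horth i k hik
        · rw [show (fun ω => G i ω * G k ω) = fun ω => G k ω * G i ω from
            funext fun ω => mul_comm _ _] at *
          exact horth k i hik
      · intro hni; exact absurd hi hni
    rw [hint1, Finset.sum_congr rfl hdiag]
    have hsum_int : ∫ ω, ∑ i ∈ Finset.range n, (G i ω)^2 ∂μ
        = ∑ i ∈ Finset.range n, ∫ ω, (G i ω)^2 ∂μ := by
      refine integral_finset_sum _ fun i _ => ?_
      have : (fun ω => (G i ω)^2) = fun ω => G i ω * G i ω := funext fun ω => sq (G i ω)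
      rw [this]; exact hGG_int i i
    rw [← hsum_int]
    calc ∫ ω, ∑ i ∈ Finset.range n, (G i ω)^2 ∂μ ≤ ∫ _ω, (2:ℝ) ∂μ := by
          refine integral_mono ?_ (integrable_const 2) (fun ω => hsq_bound n ω)
          · refine integrable_finset_sum _ fun i _ => ?_
            have : (fun ω => (G i ω)^2) = fun ω => G i ω * G i ω := funext fun ω => sq (G i ω)
            rw [this]; exact hGG_int i i
      _ = 2 := by simp
  have hbdd : ∀ n, eLpNorm (L n) 1 μ ≤ ((2:ℝ≥0) : ℝ≥0∞) := by
    intro n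
    have habs_sq : ∀ ω, |L n ω| ≤ ((L n ω)^2 + 1)/2 := by
      intro ω
      nlinarith [sq_nonneg (|L n ω| - 1), sq_abs (L n ω), abs_nonneg (L n ω)]
    have hLm : Measurable (L n) := ((hadp n).measurable).mono (hle n) le_rfl
    have hLabs : ∀ ω, |L n ω| ≤ (n:ℝ) := by
      intro ω
      rw [hL_def]
      simp only
      refine le_trans (Finset.abs_sum_le_sum_abs _ _) ?_
      calc ∑ i ∈ Finset.range n, |G i ω| ≤ ∑ _i ∈ Finset.range n, (1:ℝ) :=
            Finset.sum_le_sum fun i _ => hGabs i ω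
        _ = n := by simp
    have hsq_int : Integrable (fun ω => (L n ω)^2) μ := by
      refine (integrable_const ((n:ℝ)^2)).mono' (hLm.pow_const 2).aestronglyMeasurable
        (Filter.Eventually.of_forall fun ω => ?_)
      rw [Real.norm_eq_abs, abs_pow]
      exact pow_le_pow_left₀ (abs_nonneg _) (hLabs ω) 2
    have hL1 : ∫ ω, |L n ω| ∂μ ≤ 3/2 := by
      calc ∫ ω, |L n ω| ∂μ ≤ ∫ ω, ((L n ω)^2 + 1)/2 ∂μ := by
            refine integral_mono (hL_int n).abs ?_ habs_sq
            exact (hsq_int.add (integrable_const 1)).div_const 2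
        _ = ((∫ ω, (L n ω)^2 ∂μ) + 1)/2 := by
            rw [integral_div, integral_add hsq_int (integrable_const 1)]
            simp
        _ ≤ (2 + 1)/2 := by linarith [hL2 n]
        _ = 3/2 := by norm_num
    rw [eLpNorm_one_eq_lintegral_enorm,
      ← ofReal_integral_norm_eq_lintegral_enorm (hL_int n)]
    calc ENNReal.ofReal (∫ ω, ‖L n ω‖ ∂μ) ≤ ENNReal.ofReal (3/2) := by
          refine ENNReal.ofReal_le_ofReal ?_
          simpa only [Real.norm_eq_abs] using hL1
      _ ≤ ((2:ℝ≥0) : ℝ≥0∞) := by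
          rw [show ((2:ℝ≥0) : ℝ≥0∞) = ENNReal.ofReal 2 by simp]
          exact ENNReal.ofReal_le_ofReal (by norm_num)
  have hconv : ∀ᵐ ω ∂μ, ∃ c, Tendsto (fun n => L n ω) atTop (nhds c) :=
    hmart.submartingale.exists_ae_tendsto_of_bdd hbdd
  -- pathwise conclusion
  filter_upwards [hconv, hNae] with ω hc hNw
  obtain ⟨c, hLc⟩ := hc
  set w : ℕ → ℝ := fun i => ind i ω with hw_def
  have hw01 : ∀ i, w i = 0 ∨ w i = 1 := fun i => hind01 i ω
  have hNeq : ∀ n, N j h n ω = ∑ i ∈ Finset.range n, w i := fun n => hN j h n ω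
  have hNtend : Tendsto (fun n => ∑ i ∈ Finset.range n, w i) atTop atTop :=
    hNw.congr fun n => hNeq n
  set g : ℕ → ℝ := fun i => G i ω with hg_def
  have hg0 : ∀ i, w i = 0 → g i = 0 := by
    intro i hwi
    have hwi' : ind i ω = 0 := hwi
    simp only [hg_def, hG_def, hX_def, hwi', zero_mul, mul_zero]
  have hgtend : Tendsto (fun n => ∑ i ∈ Finset.range n, g i) atTop (nhds c) := hLc
  have hXeq : ∀ i, ((∑ k ∈ Finset.range i, w k) + 1) * g i = X i ω := by
    intro i
    have hNi : N j h i ω = ∑ k ∈ Finset.range i, w k := hNeq i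
    have h1 : N j h i ω + 1 ≠ 0 := by
      have := hNnonneg i ω; intro hcon; linarith
    rw [← hNi, hg_def, hG_def]
    simp only
    field_simp
  have hkron := iud_kron w g hw01 hg0 hgtend hNtend
  have hnum : ∀ n, (∑ i ∈ Finset.range n, ((∑ k ∈ Finset.range i, w k) + 1) * g i)
      = S j h n ω - θ j h * N j h n ω := by
    intro n
    rw [Finset.sum_congr rfl fun i _ => hXeq i, hS, hN, Finset.mul_sum,
      ← Finset.sum_sub_distrib]
    refine Finset.sum_congr rfl fun i _ => ?_
    simp only [hX_def, hind_def]
    split <;> simp <;> ring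
  have hrat : Tendsto (fun n => (S j h n ω - θ j h * N j h n ω) / N j h n ω)
      atTop (nhds 0) := by
    refine hkron.congr fun n => ?_
    rw [hnum n, ← hNeq n]
  set K := max ψmax 0 with hK_def
  have hK0 : (0:ℝ) ≤ K := le_max_right _ _
  have hB_nonneg : ∀ n, 0 ≤ ∑ k ∈ Finset.univ.erase h, N j k n ω :=
    fun n => Finset.sum_nonneg fun k _ => hNnonneg' k n ω
  have hC_bound : ∀ n, 0 ≤ ψ (∑ k ∈ Finset.univ.erase h, N j k n ω) ∧
      ψ (∑ k ∈ Finset.univ.erase h, N j k n ω) ≤ K := by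
    intro n
    rcases eq_or_lt_of_le (hB_nonneg n) with hB | hB
    · rw [← hB, hψ0]
      exact ⟨le_refl 0, hK0⟩
    · obtain ⟨h1, h2⟩ := hψpos _ hB
      exact ⟨h1.le, le_trans h2 (le_max_left _ _)⟩
  have hr_bound : ∀ n, 0 ≤ (∑ k ∈ Finset.univ.erase h, S j k n ω) /
        (∑ k ∈ Finset.univ.erase h, N j k n ω) ∧
      (∑ k ∈ Finset.univ.erase h, S j k n ω) /
        (∑ k ∈ Finset.univ.erase h, N j k n ω) ≤ 1 := by
    intro n
    have hBs0 : 0 ≤ ∑ k ∈ Finset.univ.erase h, S j k n ω :=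
      Finset.sum_nonneg fun k _ => hSnonneg k n ω
    have hBsB : (∑ k ∈ Finset.univ.erase h, S j k n ω)
        ≤ ∑ k ∈ Finset.univ.erase h, N j k n ω :=
      Finset.sum_le_sum fun k _ => hSleN k n ω
    rcases eq_or_lt_of_le (hB_nonneg n) with hB | hB
    · rw [← hB, div_zero]
      exact ⟨le_refl 0, zero_le_one⟩
    · exact ⟨div_nonneg hBs0 hB.le, (div_le_one hB).mpr hBsB⟩
  have hNev : ∀ᶠ n in atTop, (1:ℝ) ≤ N j h n ω := hNw.eventually_ge_atTop 1
  have hPbound : ∀ᶠ n in atTop, |P j h n ω - θ j h| ≤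
      (|S j h n ω - θ j h * N j h n ω| + (1 + |θ j h|) * K) / N j h n ω := by
    filter_upwards [hNev] with n h1
    obtain ⟨hC0, hCK⟩ := hC_bound n
    obtain ⟨hr0, hr1⟩ := hr_bound n
    set Bn := ∑ k ∈ Finset.univ.erase h, N j k n ω with hBn_def
    set Cn := ψ Bn with hCn_def
    set rn := (∑ k ∈ Finset.univ.erase h, S j k n ω) / Bn with hrn_def
    have hden : 0 < N j h n ω + Cn := by linarith
    rw [hP, if_neg (ne_of_gt hden)]
    have hgoal : (S j h n ω + rn * Cn) / (N j h n ω + Cn) - θ j h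
        = ((S j h n ω - θ j h * N j h n ω) + (rn - θ j h) * Cn) / (N j h n ω + Cn) := by
      field_simp
      ring
    rw [hgoal, abs_div, abs_of_pos hden]
    have hnum_le : |(S j h n ω - θ j h * N j h n ω) + (rn - θ j h) * Cn|
        ≤ |S j h n ω - θ j h * N j h n ω| + (1 + |θ j h|) * K := by
      refine le_trans (abs_add_le _ _) ?_
      refine add_le_add_right ?_ _
      rw [abs_mul, abs_of_nonneg hC0]
      have hrd : |rn - θ j h| ≤ 1 + |θ j h| := by
        refine le_trans (abs_sub _ _) ?_
        rw [abs_of_nonneg hr0]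
        linarith
      exact mul_le_mul hrd hCK hC0 (by positivity)
    have hnum_nonneg : (0:ℝ) ≤ |S j h n ω - θ j h * N j h n ω| + (1 + |θ j h|) * K :=
      add_nonneg (abs_nonneg _) (mul_nonneg (by positivity) hK0)
    exact div_le_div₀ hnum_nonneg hnum_le (by linarith) (by linarith)
  have hbound_tend : Tendsto
      (fun n => (|S j h n ω - θ j h * N j h n ω| + (1 + |θ j h|) * K) / N j h n ω)
      atTop (nhds 0) := by
    have h1 : Tendsto (fun n => |S j h n ω - θ j h * N j h n ω| / N j h n ω)
        atTop (nhds 0) := by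
      have habs := hrat.abs
      rw [abs_zero] at habs
      refine habs.congr' ?_
      filter_upwards [hNev] with n hn
      rw [abs_div, abs_of_pos (show (0:ℝ) < N j h n ω by linarith)]
    have h2 : Tendsto (fun n => ((1 + |θ j h|) * K) / N j h n ω) atTop (nhds 0) :=
      Tendsto.div_atTop tendsto_const_nhds hNw
    have := h1.add h2
    rw [add_zero] at this
    exact this.congr fun n => (add_div _ _ _).symm
  rw [← tendsto_sub_nhds_zero_iff]
  exact squeeze_zero_norm' (hPbound.mono fun n hn => by rwa [Real.norm_eq_abs]) hbound_tend
end

section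
/- Under the Interacting Urns Design with the treatment-similarity update mechanism, for every fixed stratum h ∈ {1,…,H} and treatment j ∈ {1,…,J}: if N_{j,h,n} → ∞ almost surely, then P_{j,h,n} → θ_{j,h} almost surely as n → ∞. -/
open MeasureTheory ProbabilityTheory Filter
open scoped NNReal ENNReal

open Filter Finset

/-- increments of `b` with `b (-1) = 0` -/
private def stmt10db (b : ℕ → ℝ) : ℕ → ℝ
  | 0 => b 0
  | (k+1) => b (k+1) - b k

lemma stmt10_sum_db (b : ℕ → ℝ) (n : ℕ) :
    ∑ k ∈ Finset.range (n+1), stmt10db b k = b n := by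
  induction n with
  | zero => simp [stmt10db]
  | succ n ih => rw [Finset.sum_range_succ, ih, stmt10db]; ring

lemma stmt10_db_nonneg (b : ℕ → ℝ) (hb1 : 0 ≤ b 0) (hmono : Monotone b) (k : ℕ) :
    0 ≤ stmt10db b k := by
  cases k with
  | zero => exact hb1
  | succ k => simpa [stmt10db] using hmono (Nat.le_succ k)

lemma stmt10_abel (b t : ℕ → ℝ) (n : ℕ) :
    ∑ i ∈ Finset.range n, b i * (t (i+1) - t i)
      = ∑ k ∈ Finset.range n, stmt10db b k * (t n - t k) := by
  induction n with
  | zero => simp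
  | succ n ih =>
      rw [Finset.sum_range_succ, ih, Finset.sum_range_succ]
      have h1 : ∑ k ∈ Finset.range n, stmt10db b k * (t (n+1) - t k)
          = ∑ k ∈ Finset.range n, stmt10db b k * (t n - t k)
            + (∑ k ∈ Finset.range n, stmt10db b k) * (t (n+1) - t n) := by
        rw [Finset.sum_mul, ← Finset.sum_add_distrib]
        refine Finset.sum_congr rfl fun k _ => by ring
      have h2 : (∑ k ∈ Finset.range n, stmt10db b k) + stmt10db b n = b n := by
        rw [← Finset.sum_range_succ, stmt10_sum_db]
      rw [h1]
      linear_combination (t n - t (n+1)) * h2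

/-- Kronecker's lemma for nondecreasing weights. -/
lemma stmt10_kronecker (b x : ℕ → ℝ) (hb1 : ∀ n, 1 ≤ b n) (hmono : Monotone b)
    (htop : Tendsto b atTop atTop) (L : ℝ)
    (hconv : Tendsto (fun n => ∑ i ∈ Finset.range n, x i / b i) atTop (nhds L)) :
    Tendsto (fun n => (∑ i ∈ Finset.range n, x i) / b n) atTop (nhds 0) := by
  set t : ℕ → ℝ := fun n => ∑ i ∈ Finset.range n, x i / b i with ht
  have hbpos : ∀ n, (0:ℝ) < b n := fun n => lt_of_lt_of_le one_pos (hb1 n)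
  have hxbt : ∀ i, x i = b i * (t (i+1) - t i) := by
    intro i
    have : t (i+1) - t i = x i / b i := by simp [ht, Finset.sum_range_succ]
    rw [this, mul_div_cancel₀ _ (ne_of_gt (hbpos i))]
  -- boundedness of t
  obtain ⟨T, hT⟩ : ∃ T, ∀ n, |t n| ≤ T := by
    have := hconv.abs.bddAbove_range
    obtain ⟨T, hTmem⟩ := this
    exact ⟨T, fun n => hTmem (Set.mem_range_self n)⟩
  have hTnonneg : 0 ≤ T := le_trans (abs_nonneg _) (hT 0)
  have hdbnn : ∀ k, 0 ≤ stmt10db b k :=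
    stmt10_db_nonneg b (le_of_lt (hbpos 0)) hmono
  have hsumdb_le : ∀ n, ∑ k ∈ Finset.range n, stmt10db b k ≤ b n := by
    intro n
    calc ∑ k ∈ Finset.range n, stmt10db b k
        ≤ ∑ k ∈ Finset.range (n+1), stmt10db b k := by
          rw [Finset.sum_range_succ]; nlinarith [hdbnn n]
      _ = b n := stmt10_sum_db b n
  rw [Metric.tendsto_atTop]
  intro ε hε
  -- choose m such that |t k - L| ≤ ε/8 for k ≥ m
  obtain ⟨m, hm⟩ := (Metric.tendsto_atTop.1 hconv) (ε/8) (by linarith)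
  -- choose n₀ such that b n is large
  obtain ⟨n₀, hn₀⟩ := Filter.eventually_atTop.1 (htop.eventually_ge_atTop (1 + (2*T*b m) / (ε/4)))
  refine ⟨max m n₀, fun n hn => ?_⟩
  have hnm : m ≤ n := le_trans (le_max_left _ _) hn
  have hnn0 : n₀ ≤ n := le_trans (le_max_right _ _) hn
  have hbn : 1 + (2*T*b m) / (ε/4) ≤ b n := hn₀ n hnn0
  have key : |∑ i ∈ Finset.range n, x i| ≤ 2*T*b m + (ε/4) * b n := by
    have habel : ∑ i ∈ Finset.range n, x i
        = ∑ k ∈ Finset.range n, stmt10db b k * (t n - t k) := by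
      calc ∑ i ∈ Finset.range n, x i
          = ∑ i ∈ Finset.range n, b i * (t (i+1) - t i) :=
            Finset.sum_congr rfl fun i _ => hxbt i
        _ = _ := stmt10_abel b t n
    rw [habel, Finset.range_eq_Ico,
      ← Finset.sum_Ico_consecutive (fun k => stmt10db b k * (t n - t k)) (Nat.zero_le m) hnm]
    have hbound1 : |∑ k ∈ Finset.Ico 0 m, stmt10db b k * (t n - t k)| ≤ 2*T*b m := by
      calc |∑ k ∈ Finset.Ico 0 m, stmt10db b k * (t n - t k)|
          ≤ ∑ k ∈ Finset.Ico 0 m, |stmt10db b k * (t n - t k)| :=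
            Finset.abs_sum_le_sum_abs _ _
        _ ≤ ∑ k ∈ Finset.Ico 0 m, stmt10db b k * (2*T) := by
            refine Finset.sum_le_sum fun k _ => ?_
            rw [abs_mul, abs_of_nonneg (hdbnn k)]
            refine mul_le_mul_of_nonneg_left ?_ (hdbnn k)
            calc |t n - t k| ≤ |t n| + |t k| := abs_sub _ _
              _ ≤ T + T := add_le_add (hT n) (hT k)
              _ = 2*T := by ring
        _ = (∑ k ∈ Finset.Ico 0 m, stmt10db b k) * (2*T) := by rw [Finset.sum_mul]
        _ ≤ b m * (2*T) := by
            refine mul_le_mul_of_nonneg_right ?_ (by linarith)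
            rw [← Finset.range_eq_Ico]; exact hsumdb_le m
        _ = 2*T*b m := by ring
    have hbound2 : |∑ k ∈ Finset.Ico m n, stmt10db b k * (t n - t k)| ≤ (ε/4) * b n := by
      calc |∑ k ∈ Finset.Ico m n, stmt10db b k * (t n - t k)|
          ≤ ∑ k ∈ Finset.Ico m n, |stmt10db b k * (t n - t k)| :=
            Finset.abs_sum_le_sum_abs _ _
        _ ≤ ∑ k ∈ Finset.Ico m n, stmt10db b k * (ε/4) := by
            refine Finset.sum_le_sum fun k hk => ?_
            rw [abs_mul, abs_of_nonneg (hdbnn k)]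
            refine mul_le_mul_of_nonneg_left ?_ (hdbnn k)
            have hk' := (Finset.mem_Ico.1 hk).1
            have h1 := hm n hnm
            have h2 := hm k hk'
            rw [Real.dist_eq] at h1 h2
            have h3 := abs_sub_le (t n) L (t k)
            rw [abs_sub_comm L (t k)] at h3
            linarith
        _ = (∑ k ∈ Finset.Ico m n, stmt10db b k) * (ε/4) := by rw [Finset.sum_mul]
        _ ≤ b n * (ε/4) := by
            refine mul_le_mul_of_nonneg_right ?_ (by linarith)
            calc ∑ k ∈ Finset.Ico m n, stmt10db b k
                ≤ ∑ k ∈ Finset.range n, stmt10db b k := by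
                  refine Finset.sum_le_sum_of_subset_of_nonneg ?_ (fun k _ _ => hdbnn k)
                  rw [Finset.range_eq_Ico]
                  exact Finset.Ico_subset_Ico (Nat.zero_le m) le_rfl
              _ ≤ b n := hsumdb_le n
        _ = (ε/4) * b n := by ring
    calc |∑ k ∈ Finset.Ico 0 m, stmt10db b k * (t n - t k)
            + ∑ k ∈ Finset.Ico m n, stmt10db b k * (t n - t k)|
        ≤ |∑ k ∈ Finset.Ico 0 m, stmt10db b k * (t n - t k)|
            + |∑ k ∈ Finset.Ico m n, stmt10db b k * (t n - t k)| := abs_add_le _ _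
      _ ≤ 2*T*b m + (ε/4) * b n := add_le_add hbound1 hbound2
  have hdiv : |(∑ i ∈ Finset.range n, x i) / b n| ≤ (2*T*b m)/b n + ε/4 := by
    rw [abs_div, abs_of_pos (hbpos n), div_le_iff₀ (hbpos n)]
    calc |∑ i ∈ Finset.range n, x i| ≤ 2*T*b m + (ε/4) * b n := key
      _ = ((2*T*b m)/b n + ε/4) * b n := by rw [add_mul, div_mul_cancel₀ _ (ne_of_gt (hbpos n))]
  have hfinal : (2*T*b m)/b n ≤ ε/4 := by
    rw [div_le_iff₀ (hbpos n)]
    have hbm : 0 < b m := hbpos m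
    have h1 : (2*T*b m) / (ε/4) ≤ b n - 1 := by linarith
    have h2 : 2*T*b m ≤ (ε/4) * (b n - 1) := by
      rw [div_le_iff₀ (by linarith : (0:ℝ) < ε/4)] at h1
      linarith
    nlinarith [hbpos n, hε]
  rw [Real.dist_eq, sub_zero]
  calc |(∑ i ∈ Finset.range n, x i) / b n| ≤ (2*T*b m)/b n + ε/4 := hdiv
    _ ≤ ε/4 + ε/4 := by linarith
    _ < ε := by linarith

open Finset

lemma stmt10_invariant (I : ℕ → ℝ) (hI : ∀ i, I i = 0 ∨ I i = 1) :
    ∀ n, ∑ i ∈ Finset.range n, I i / (1 + ∑ k ∈ Finset.range i, I k)^2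
      ≤ 2 - 2 / (1 + ∑ k ∈ Finset.range n, I k) := by
  have hInn : ∀ i, 0 ≤ I i := fun i => by rcases hI i with h | h <;> simp [h]
  have hNnn : ∀ n, 0 ≤ ∑ k ∈ Finset.range n, I k :=
    fun n => Finset.sum_nonneg fun k _ => hInn k
  intro n
  induction n with
  | zero => simp
  | succ n ih =>
      rw [Finset.sum_range_succ, Finset.sum_range_succ]
      set Nn := ∑ k ∈ Finset.range n, I k with hNn
      have hNpos : (0:ℝ) < 1 + Nn := by have := hNnn n; rw [← hNn] at this; linarith
      rcases hI n with h | h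
      · rw [h]; simp only [add_zero, zero_div]; linarith
      · rw [h]
        have h2 : (0:ℝ) < 2 + Nn := by linarith
        have key : 1 / (1+Nn)^2 ≤ 2/(1+Nn) - 2/(2+Nn) := by
          rw [div_sub_div _ _ (ne_of_gt hNpos) (ne_of_gt h2), div_le_div_iff₀ (by positivity) (by positivity)]
          have hN0 : 0 ≤ Nn := by have := hNnn n; rw [← hNn] at this; linarith
          nlinarith
        have : 2 / (1 + (Nn + 1)) = 2 / (2 + Nn) := by ring_nf
        rw [this]
        linarith

lemma stmt10_pool {α : Type*} (A : Finset α) (Sh Nh th c : ℝ) (Sk Nk tk : α → ℝ)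
    (hNh : 1 ≤ Nh) (hth : th = Sh / Nh)
    (hSk0 : ∀ k ∈ A, 0 ≤ Sk k) (hSkNk : ∀ k ∈ A, Sk k ≤ Nk k)
    (htk : ∀ k ∈ A, tk k = Sk k / Nk k)
    (hc : 0 ≤ c) (hA : ∀ k ∈ A, |tk k - th| ≤ c) :
    |(Sh + ∑ k ∈ A, Sk k) / (Nh + ∑ k ∈ A, Nk k) - th| ≤ c := by
  have hNk0 : ∀ k ∈ A, 0 ≤ Nk k := fun k hk => le_trans (hSk0 k hk) (hSkNk k hk)
  have hsumN : 0 ≤ ∑ k ∈ A, Nk k := Finset.sum_nonneg hNk0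
  have hden : (0:ℝ) < Nh + ∑ k ∈ A, Nk k := by linarith
  have hNhne : Nh ≠ 0 := by linarith
  have hnum : (Sh + ∑ k ∈ A, Sk k) - th * (Nh + ∑ k ∈ A, Nk k)
      = ∑ k ∈ A, Nk k * (tk k - th) := by
    have h1 : th * Nh = Sh := by rw [hth, div_mul_cancel₀ _ hNhne]
    have h2 : ∀ k ∈ A, Nk k * (tk k - th) = Sk k - th * Nk k := by
      intro k hk
      by_cases hNkz : Nk k = 0
      · have hSz : Sk k = 0 := le_antisymm (hNkz ▸ hSkNk k hk) (hSk0 k hk)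
        rw [hNkz, hSz]; ring
      · rw [htk k hk, mul_sub, mul_comm, div_mul_cancel₀ _ hNkz]; ring
    rw [Finset.sum_congr rfl h2, Finset.sum_sub_distrib, ← Finset.mul_sum]
    ring_nf
    linarith [h1]
  have habs : |∑ k ∈ A, Nk k * (tk k - th)| ≤ c * (Nh + ∑ k ∈ A, Nk k) := by
    calc |∑ k ∈ A, Nk k * (tk k - th)| ≤ ∑ k ∈ A, |Nk k * (tk k - th)| :=
          Finset.abs_sum_le_sum_abs _ _
      _ ≤ ∑ k ∈ A, Nk k * c := by
          refine Finset.sum_le_sum fun k hk => ?_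
          rw [abs_mul, abs_of_nonneg (hNk0 k hk)]
          exact mul_le_mul_of_nonneg_left (hA k hk) (hNk0 k hk)
      _ = (∑ k ∈ A, Nk k) * c := by rw [Finset.sum_mul]
      _ ≤ (Nh + ∑ k ∈ A, Nk k) * c := by nlinarith
      _ = c * (Nh + ∑ k ∈ A, Nk k) := by ring
  have heq : (Sh + ∑ k ∈ A, Sk k) / (Nh + ∑ k ∈ A, Nk k) - th
      = ((Sh + ∑ k ∈ A, Sk k) - th * (Nh + ∑ k ∈ A, Nk k)) / (Nh + ∑ k ∈ A, Nk k) := by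
    field_simp
  rw [heq, hnum, abs_div, abs_of_pos hden, div_le_iff₀ hden]
  exact habs
theorem stmt10
    {Ω : Type*} [MeasurableSpace Ω] (μ : Measure Ω) [IsProbabilityMeasure μ]
    (H J : ℕ) (hH : 1 ≤ H) (hJ : 2 ≤ J)
    (Z : ℕ → Ω → Fin H) (δ : ℕ → Ω → Fin J) (Y : ℕ → Ω → ℝ)
    (p : Fin H → ℝ)
    (hZmeas : ∀ i, Measurable (Z i)) (hδmeas : ∀ i, Measurable (δ i))
    (hYmeas : ∀ i, Measurable (Y i))
    (hY01 : ∀ i ω, Y i ω = 0 ∨ Y i ω = 1)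
    (hp : ∀ h, 0 < p h)
    (𝓕 : ℕ → MeasurableSpace Ω)
    (h𝓕 : ∀ n, 𝓕 n = ⨆ i ∈ Finset.range n,
      (MeasurableSpace.comap (Z i) ⊤ ⊔ MeasurableSpace.comap (δ i) ⊤ ⊔ MeasurableSpace.comap (Y i) ⊤))
    (hZlaw : ∀ i h, μ {ω | Z i ω = h} = ENNReal.ofReal (p h))
    (hZindep : ∀ i, Indep (MeasurableSpace.comap (Z i) ⊤) (𝓕 i) μ)
    (θ : Fin J → Fin H → ℝ)
    (hθmem : ∀ j h, θ j h ∈ Set.Ioo (0:ℝ) 1)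
    (hYcond : ∀ i, μ[Y i | 𝓕 i ⊔ MeasurableSpace.comap (fun ω => (Z i ω, δ i ω)) ⊤]
        =ᵐ[μ] fun ω => θ (δ i ω) (Z i ω))
    (S N : Fin J → Fin H → ℕ → Ω → ℝ)
    (hS : ∀ j h n ω, S j h n ω = ∑ i ∈ Finset.range n, if Z i ω = h ∧ δ i ω = j then Y i ω else 0)
    (hN : ∀ j h n ω, N j h n ω = ∑ i ∈ Finset.range n, if Z i ω = h ∧ δ i ω = j then 1 else 0)
    (θhat : Fin J → Fin H → ℕ → Ω → ℝ)
    (hθhat : ∀ j h n ω, θhat j h n ω = S j h n ω / N j h n ω)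
    (c : ℕ → ℝ) (hcpos : ∀ n, 0 < c n) (hcdec : StrictAnti c)
    (hclim : Tendsto c atTop (nhds 0))
    (P : Fin J → Fin H → ℕ → Ω → ℝ)
    (hP : ∀ j h n ω,
      P j h n ω =
        if N j h n ω + ∑ k ∈ (Finset.univ.erase h).filter
            (fun k => |θhat j k n ω - θhat j h n ω| ≤ c n), N j k n ω = 0 then 1/2
        else (S j h n ω + ∑ k ∈ (Finset.univ.erase h).filter
            (fun k => |θhat j k n ω - θhat j h n ω| ≤ c n), S j k n ω) /
          (N j h n ω + ∑ k ∈ (Finset.univ.erase h).filter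
            (fun k => |θhat j k n ω - θhat j h n ω| ≤ c n), N j k n ω))
    :
    ∀ (j : Fin J) (h : Fin H),
      (∀ᵐ ω ∂μ, Tendsto (fun n => N j h n ω) atTop atTop) →
      ∀ᵐ ω ∂μ, Tendsto (fun n => P j h n ω) atTop (nhds (θ j h)) := by
  classical
  intro j h hNtop
  -- basic bounds on Y and θ
  obtain ⟨hθ0, hθ1⟩ := hθmem j h
  have hYabs : ∀ i ω, |Y i ω - θ j h| ≤ 1 := by
    intro i ω
    rcases hY01 i ω with hy | hy <;> rw [hy, abs_le] <;> constructor <;> linarith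
  have hY1 : ∀ i ω, |Y i ω| ≤ 1 := by
    intro i ω; rcases hY01 i ω with hy | hy <;> rw [hy] <;> norm_num
  -- the indicator
  set I : ℕ → Ω → ℝ := fun i ω => if Z i ω = h ∧ δ i ω = j then (1:ℝ) else 0 with hIdef
  have hI01 : ∀ i ω, I i ω = 0 ∨ I i ω = 1 := by
    intro i ω; by_cases hc' : Z i ω = h ∧ δ i ω = j <;> simp [hIdef, hc']
  have hInn : ∀ i ω, 0 ≤ I i ω := by
    intro i ω; rcases hI01 i ω with h' | h' <;> rw [h'] <;> norm_num
  have hIle : ∀ i ω, I i ω ≤ 1 := by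
    intro i ω; rcases hI01 i ω with h' | h' <;> rw [h'] <;> norm_num
  -- N as a sum of indicators
  have hNsum : ∀ n ω, N j h n ω = ∑ i ∈ Finset.range n, I i ω := fun n ω => hN j h n ω
  have hNnn : ∀ n ω, 0 ≤ N j h n ω := fun n ω => by
    rw [hNsum]; exact Finset.sum_nonneg fun i _ => hInn i ω
  have hNsucc : ∀ n ω, N j h (n+1) ω = N j h n ω + I n ω := by
    intro n ω; rw [hNsum, hNsum, Finset.sum_range_succ]
  -- σ-algebra facts
  have h𝓕le : ∀ n, 𝓕 n ≤ ‹MeasurableSpace Ω› := by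
    intro n
    rw [h𝓕 n]
    refine iSup_le fun i => iSup_le fun _ => ?_
    refine sup_le (sup_le ?_ ?_) ?_
    · intro s hs
      obtain ⟨t, -, rfl⟩ := hs
      exact hZmeas i t.toFinite.measurableSet
    · intro s hs
      obtain ⟨t, -, rfl⟩ := hs
      exact hδmeas i t.toFinite.measurableSet
    · intro s hs
      obtain ⟨t, -, rfl⟩ := hs
      have hpre : Y i ⁻¹' t = Y i ⁻¹' (t ∩ {0, 1}) := by
        ext ω
        rcases hY01 i ω with hy | hy <;> simp [hy]
      rw [hpre]
      exact hYmeas i ((Set.finite_singleton (1:ℝ)).insert 0 |>.inter_of_right t).measurableSet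
  have h𝓕mono : Monotone 𝓕 := by
    intro a b hab
    rw [h𝓕 a, h𝓕 b]
    refine iSup_le fun i => iSup_le fun hi => ?_
    exact le_iSup₂_of_le i (Finset.mem_range.2 (lt_of_lt_of_le (Finset.mem_range.1 hi) hab)) le_rfl
  set ℱ : Filtration ℕ ‹MeasurableSpace Ω› := ⟨𝓕, h𝓕mono, h𝓕le⟩ with hℱdef
  -- measurability within the filtration
  have hZm : ∀ i n, i < n → Measurable[𝓕 n] (Z i) := by
    intro i n hi
    rw [measurable_iff_comap_le, h𝓕 n]
    exact le_trans (MeasurableSpace.comap_mono le_top)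
      (le_iSup₂_of_le i (Finset.mem_range.2 hi) (le_trans le_sup_left le_sup_left))
  have hδm : ∀ i n, i < n → Measurable[𝓕 n] (δ i) := by
    intro i n hi
    rw [measurable_iff_comap_le, h𝓕 n]
    exact le_trans (MeasurableSpace.comap_mono le_top)
      (le_iSup₂_of_le i (Finset.mem_range.2 hi) (le_trans le_sup_right le_sup_left))
  have hYm : ∀ i n, i < n → Measurable[𝓕 n] (Y i) := by
    intro i n hi
    rw [measurable_iff_comap_le, h𝓕 n]
    exact le_trans (MeasurableSpace.comap_mono le_top)
      (le_iSup₂_of_le i (Finset.mem_range.2 hi) le_sup_right)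
  have hIm : ∀ i n, i < n → Measurable[𝓕 n] (I i) := by
    intro i n hi
    refine Measurable.ite ?_ measurable_const measurable_const
    have h1 : MeasurableSet[𝓕 n] (Z i ⁻¹' {h}) := hZm i n hi (measurableSet_singleton h)
    have h2 : MeasurableSet[𝓕 n] (δ i ⁻¹' {j}) := hδm i n hi (measurableSet_singleton j)
    exact h1.inter h2
  have hNm : ∀ n n', n ≤ n' → Measurable[𝓕 n'] (N j h n) := by
    intro n n' hn
    have : N j h n = fun ω => ∑ i ∈ Finset.range n, I i ω := funext fun ω => hNsum n ω
    rw [this]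
    exact Finset.measurable_sum _ fun i hi =>
      hIm i n' (lt_of_lt_of_le (Finset.mem_range.1 hi) hn)
  -- the martingale increments
  set D : ℕ → Ω → ℝ := fun i ω => I i ω * (Y i ω - θ j h) with hDdef
  set W : ℕ → Ω → ℝ := fun i ω => (1 + N j h i ω)⁻¹ * D i ω with hWdef
  set M : ℕ → Ω → ℝ := fun n ω => ∑ i ∈ Finset.range n, W i ω with hMdef
  have hDabs : ∀ i ω, |D i ω| ≤ 1 := by
    intro i ω
    rw [hDdef]
    calc |I i ω * (Y i ω - θ j h)| = |I i ω| * |Y i ω - θ j h| := abs_mul _ _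
      _ ≤ 1 * 1 := mul_le_mul (by rw [abs_of_nonneg (hInn i ω)]; exact hIle i ω)
          (hYabs i ω) (abs_nonneg _) zero_le_one
      _ = 1 := one_mul 1
  have hinvle : ∀ i ω, (1 + N j h i ω)⁻¹ ≤ 1 := by
    intro i ω
    rw [inv_le_one_iff₀]
    right; linarith [hNnn i ω]
  have hinvnn : ∀ i ω, 0 ≤ (1 + N j h i ω)⁻¹ := by
    intro i ω; exact inv_nonneg.2 (by linarith [hNnn i ω])
  have hNp2 : ∀ i ω', (0:ℝ) < (1 + N j h i ω')^2 := by
    intro i ω'; have := hNnn i ω'; positivity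
  have hWabs : ∀ i ω, |W i ω| ≤ 1 := by
    intro i ω
    rw [hWdef]
    calc |(1 + N j h i ω)⁻¹ * D i ω| = |(1 + N j h i ω)⁻¹| * |D i ω| := abs_mul _ _
      _ ≤ 1 * 1 := mul_le_mul (by rw [abs_of_nonneg (hinvnn i ω)]; exact hinvle i ω)
          (hDabs i ω) (abs_nonneg _) zero_le_one
      _ = 1 := one_mul 1
  -- measurability of increments
  have hWm : ∀ i n, i < n → Measurable[𝓕 n] (W i) := by
    intro i n hi
    have hNmeas : Measurable[𝓕 n] (N j h i) := hNm i n hi.le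
    have hDm : Measurable[𝓕 n] (D i) :=
      (hIm i n hi).mul ((hYm i n hi).sub measurable_const)
    exact ((measurable_const.add hNmeas).inv).mul hDm
  have hMm : ∀ n, Measurable[𝓕 n] (M n) := by
    intro n
    exact Finset.measurable_sum _ fun i hi => hWm i n (Finset.mem_range.1 hi)
  -- integrability helper
  have hIntOf : ∀ (f : Ω → ℝ) (C : ℝ), Measurable f → (∀ ω, |f ω| ≤ C) → Integrable f μ := by
    intro f C hf hb
    exact ⟨hf.aestronglyMeasurable,
      HasFiniteIntegral.of_bounded (C := C) (ae_of_all μ fun ω => by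
        rw [Real.norm_eq_abs]; exact hb ω)⟩
  have hImeas : ∀ i, Measurable (I i) :=
    fun i => (hIm i (i+1) (Nat.lt_succ_self i)).mono (h𝓕le (i+1)) le_rfl
  have hNmeas : ∀ n, Measurable (N j h n) :=
    fun n => (hNm n n le_rfl).mono (h𝓕le n) le_rfl
  have hDmeas : ∀ i, Measurable (D i) :=
    fun i => (hImeas i).mul ((hYmeas i).sub measurable_const)
  have hWmeas : ∀ i, Measurable (W i) :=
    fun i => (hWm i (i+1) (Nat.lt_succ_self i)).mono (h𝓕le (i+1)) le_rfl
  have hMmeas : ∀ n, Measurable (M n) :=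
    fun n => (hMm n).mono (h𝓕le n) le_rfl
  have hMabs : ∀ n ω, |M n ω| ≤ n := by
    intro n ω
    rw [hMdef]
    calc |∑ i ∈ Finset.range n, W i ω| ≤ ∑ i ∈ Finset.range n, |W i ω| :=
        Finset.abs_sum_le_sum_abs _ _
      _ ≤ ∑ i ∈ Finset.range n, (1:ℝ) := Finset.sum_le_sum fun i _ => hWabs i ω
      _ = n := by simp
  have hDint : ∀ i, Integrable (D i) μ := fun i => hIntOf _ 1 (hDmeas i) (hDabs i)
  have hWint : ∀ i, Integrable (W i) μ := fun i => hIntOf _ 1 (hWmeas i) (hWabs i)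
  have hMint : ∀ n, Integrable (M n) μ := fun n => hIntOf _ n (hMmeas n) (hMabs n)
  have hYint : ∀ i, Integrable (Y i) μ := fun i => hIntOf _ 1 (hYmeas i) (hY1 i)
  -- conditional expectation of D given the enlarged σ-algebra is zero
  have hGle : ∀ i, (𝓕 i ⊔ MeasurableSpace.comap (fun ω => (Z i ω, δ i ω)) ⊤)
      ≤ ‹MeasurableSpace Ω› := by
    intro i
    refine sup_le (h𝓕le i) ?_
    intro s hs
    obtain ⟨t, -, rfl⟩ := hs
    exact ((hZmeas i).prodMk (hδmeas i)) t.toFinite.measurableSet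
  have hIsmG : ∀ i, StronglyMeasurable[𝓕 i ⊔ MeasurableSpace.comap
      (fun ω => (Z i ω, δ i ω)) ⊤] (I i) := by
    intro i
    have hset : MeasurableSet[MeasurableSpace.comap (fun ω => (Z i ω, δ i ω)) ⊤]
        {ω | Z i ω = h ∧ δ i ω = j} := by
      refine ⟨{(h, j)}, trivial, ?_⟩
      ext ω; simp [Prod.ext_iff]
    have hm1 : Measurable[MeasurableSpace.comap (fun ω => (Z i ω, δ i ω)) ⊤] (I i) :=
      Measurable.ite hset measurable_const measurable_const
    have hm2 : Measurable[𝓕 i ⊔ MeasurableSpace.comap (fun ω => (Z i ω, δ i ω)) ⊤] (I i) :=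
      hm1.mono le_sup_right le_rfl
    exact hm2.stronglyMeasurable
  have hD𝓕 : ∀ i, μ[D i | 𝓕 i] =ᵐ[μ] 0 := by
    intro i
    have hIYint : Integrable (I i * Y i) μ :=
      hIntOf _ 1 ((hImeas i).mul (hYmeas i)) (fun ω => by
        rw [Pi.mul_apply, abs_mul]
        calc |I i ω| * |Y i ω| ≤ 1 * 1 := mul_le_mul (by
              rw [abs_of_nonneg (hInn i ω)]; exact hIle i ω) (hY1 i ω)
              (abs_nonneg _) zero_le_one
          _ = 1 := one_mul 1)
    have hθIint : Integrable (fun ω => θ j h * I i ω) μ :=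
      hIntOf _ 1 (measurable_const.mul (hImeas i)) (fun ω => by
        rw [abs_mul]
        calc |θ j h| * |I i ω| ≤ 1 * 1 := mul_le_mul (by
              rw [abs_of_nonneg hθ0.le]; exact hθ1.le) (by
              rw [abs_of_nonneg (hInn i ω)]; exact hIle i ω)
              (abs_nonneg _) zero_le_one
          _ = 1 := one_mul 1)
    have hDsplit : D i = I i * Y i - fun ω => θ j h * I i ω := by
      funext ω
      simp only [hDdef, Pi.sub_apply, Pi.mul_apply]
      ring
    have hmul := condExp_mul_of_stronglyMeasurable_left (μ := μ) (hIsmG i) hIYint (hYint i)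
    have hmul2 : μ[I i * Y i | 𝓕 i ⊔ MeasurableSpace.comap (fun ω => (Z i ω, δ i ω)) ⊤]
        =ᵐ[μ] I i * fun ω => θ (δ i ω) (Z i ω) :=
      hmul.trans ((EventuallyEq.refl _ _).mul (hYcond i))
    have hconst : μ[(fun ω => θ j h * I i ω) |
        𝓕 i ⊔ MeasurableSpace.comap (fun ω => (Z i ω, δ i ω)) ⊤]
        = fun ω => θ j h * I i ω :=
      condExp_of_stronglyMeasurable (hGle i) ((hIsmG i).const_mul (θ j h)) hθIint
    have hzero : (I i * fun ω => θ (δ i ω) (Z i ω)) - (fun ω => θ j h * I i ω)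
        = (0 : Ω → ℝ) := by
      funext ω
      simp only [Pi.sub_apply, Pi.mul_apply, Pi.zero_apply, hIdef]
      by_cases hc' : Z i ω = h ∧ δ i ω = j
      · rw [if_pos hc', hc'.1, hc'.2]; ring
      · rw [if_neg hc']; ring
    have hDG : μ[D i | 𝓕 i ⊔ MeasurableSpace.comap (fun ω => (Z i ω, δ i ω)) ⊤]
        =ᵐ[μ] 0 := by
      rw [hDsplit]
      calc μ[I i * Y i - (fun ω => θ j h * I i ω) |
            𝓕 i ⊔ MeasurableSpace.comap (fun ω => (Z i ω, δ i ω)) ⊤]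
          =ᵐ[μ] μ[I i * Y i | 𝓕 i ⊔ MeasurableSpace.comap (fun ω => (Z i ω, δ i ω)) ⊤]
            - μ[(fun ω => θ j h * I i ω) |
              𝓕 i ⊔ MeasurableSpace.comap (fun ω => (Z i ω, δ i ω)) ⊤] :=
            condExp_sub hIYint hθIint _
        _ =ᵐ[μ] (I i * fun ω => θ (δ i ω) (Z i ω)) - (fun ω => θ j h * I i ω) := by
            rw [hconst]
            exact hmul2.sub (EventuallyEq.refl _ _)
        _ =ᵐ[μ] 0 := by rw [hzero]
    have htower := condExp_condExp_of_le
      (le_sup_left : 𝓕 i ≤ 𝓕 i ⊔ MeasurableSpace.comap (fun ω => (Z i ω, δ i ω)) ⊤)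
      (hGle i) (f := D i) (μ := μ)
    refine htower.symm.trans ?_
    refine (condExp_congr_ae (m := 𝓕 i) hDG).trans ?_
    rw [condExp_zero]
  have hWcond : ∀ i, μ[W i | 𝓕 i] =ᵐ[μ] 0 := by
    intro i
    have hg_sm : StronglyMeasurable[𝓕 i] (fun ω => (1 + N j h i ω)⁻¹) :=
      ((measurable_const.add (hNm i i le_rfl)).inv).stronglyMeasurable
    have hWsplit : W i = (fun ω => (1 + N j h i ω)⁻¹) * D i := rfl
    rw [hWsplit]
    have hWint' : Integrable ((fun ω => (1 + N j h i ω)⁻¹) * D i) μ := hWint i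
    calc μ[(fun ω => (1 + N j h i ω)⁻¹) * D i | 𝓕 i]
        =ᵐ[μ] (fun ω => (1 + N j h i ω)⁻¹) * μ[D i | 𝓕 i] :=
          condExp_mul_of_stronglyMeasurable_left hg_sm hWint' (hDint i)
      _ =ᵐ[μ] (fun ω => (1 + N j h i ω)⁻¹) * (0 : Ω → ℝ) :=
          (EventuallyEq.refl _ _).mul (hD𝓕 i)
      _ = 0 := by rw [mul_zero]
  -- M is a martingale
  have hadp : StronglyAdapted ℱ M := fun n => (hMm n).stronglyMeasurable
  have hMdiff : ∀ i, M (i+1) - M i = W i := by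
    intro i
    funext ω
    simp only [hMdef, Pi.sub_apply, Finset.sum_range_succ]
    ring
  have hMart : Martingale M ℱ μ := by
    refine martingale_of_condExp_sub_eq_zero_nat hadp hMint fun i => ?_
    rw [hMdiff i]
    exact hWcond i
  -- L² bound
  have hM2int : ∀ n, Integrable (fun ω => (M n ω)^2) μ := by
    intro n
    refine hIntOf _ ((n:ℝ)^2) ((hMmeas n).pow_const 2) fun ω => ?_
    rw [abs_pow]
    exact pow_le_pow_left₀ (abs_nonneg _) (hMabs n ω) 2
  have hMWint : ∀ n, Integrable (M n * W n) μ := by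
    intro n
    refine hIntOf _ n ((hMmeas n).mul (hWmeas n)) fun ω => ?_
    rw [Pi.mul_apply, abs_mul]
    calc |M n ω| * |W n ω| ≤ (n:ℝ) * 1 :=
        mul_le_mul (hMabs n ω) (hWabs n ω) (abs_nonneg _) (Nat.cast_nonneg n)
      _ = n := mul_one _
  have hW2int : ∀ n, Integrable (fun ω => (W n ω)^2) μ := by
    intro n
    refine hIntOf _ 1 ((hWmeas n).pow_const 2) fun ω => ?_
    rw [abs_pow]
    calc |W n ω|^2 ≤ 1^2 := pow_le_pow_left₀ (abs_nonneg _) (hWabs n ω) 2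
      _ = 1 := one_pow 2
  have hFint : ∀ n, Integrable (fun ω => ∑ i ∈ Finset.range n,
      I i ω / (1 + N j h i ω)^2) μ := by
    intro n
    refine hIntOf _ n (Finset.measurable_sum _ fun i _ =>
      (hImeas i).div ((measurable_const.add (hNmeas i)).pow_const 2)) fun ω => ?_
    have hterm : ∀ i, |I i ω / (1 + N j h i ω)^2| ≤ 1 := by
      intro i
      rw [abs_div, abs_of_nonneg (hInn i ω), abs_of_nonneg (by positivity)]
      rw [div_le_one (hNp2 i ω)]
      have h1' : (1:ℝ) ≤ (1 + N j h i ω)^2 := by nlinarith [hNnn i ω]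
      linarith [hIle i ω]
    calc |∑ i ∈ Finset.range n, I i ω / (1 + N j h i ω)^2|
        ≤ ∑ i ∈ Finset.range n, |I i ω / (1 + N j h i ω)^2| :=
          Finset.abs_sum_le_sum_abs _ _
      _ ≤ ∑ i ∈ Finset.range n, (1:ℝ) := Finset.sum_le_sum fun i _ => hterm i
      _ = n := by simp
  have hMWzero : ∀ n, ∫ ω, (M n * W n) ω ∂μ = 0 := by
    intro n
    rw [← integral_condExp (h𝓕le n) (f := M n * W n) (μ := μ)]
    have h1 : μ[M n * W n | 𝓕 n] =ᵐ[μ] M n * μ[W n | 𝓕 n] :=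
      condExp_mul_of_stronglyMeasurable_left (hadp n) (hMWint n) (hWint n)
    have h2 : μ[M n * W n | 𝓕 n] =ᵐ[μ] 0 := by
      refine h1.trans ?_
      calc M n * μ[W n | 𝓕 n] =ᵐ[μ] M n * (0 : Ω → ℝ) :=
          (EventuallyEq.refl _ _).mul (hWcond n)
        _ = 0 := by rw [mul_zero]
      
    rw [integral_congr_ae h2]
    simp
  have hW2le : ∀ n ω, (W n ω)^2 ≤ I n ω / (1 + N j h n ω)^2 := by
    intro n ω
    have hD2 : (D n ω)^2 ≤ I n ω := by
      show (I n ω * (Y n ω - θ j h))^2 ≤ I n ω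
      rcases hI01 n ω with h' | h' <;> rw [h']
      · simp
      · nlinarith [hYabs n ω, sq_abs (Y n ω - θ j h), abs_nonneg (Y n ω - θ j h)]
    show ((1 + N j h n ω)⁻¹ * D n ω)^2 ≤ I n ω / (1 + N j h n ω)^2
    rw [mul_pow, inv_pow, div_eq_inv_mul]
    exact mul_le_mul_of_nonneg_left hD2 (by positivity)
  have hsq : ∀ n, ∫ ω, (M n ω)^2 ∂μ
      ≤ ∫ ω, ∑ i ∈ Finset.range n, I i ω / (1 + N j h i ω)^2 ∂μ := by
    intro n
    induction n with
    | zero => simp [hMdef]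
    | succ n ih =>
        have hMsucc : ∀ ω, M (n+1) ω = M n ω + W n ω := by
          intro ω; rw [hMdef]; simp [Finset.sum_range_succ]
        have hexpand : ∀ ω, (M (n+1) ω)^2 = (M n ω)^2 + 2 * (M n * W n) ω + (W n ω)^2 := by
          intro ω; rw [hMsucc ω, Pi.mul_apply]; ring
        have hint1 : ∫ ω, (M (n+1) ω)^2 ∂μ
            = ∫ ω, (M n ω)^2 ∂μ + 2 * ∫ ω, (M n * W n) ω ∂μ + ∫ ω, (W n ω)^2 ∂μ := by
          have e1 : ∫ ω, (M (n+1) ω)^2 ∂μ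
              = ∫ ω, ((M n ω)^2 + 2 * (M n * W n) ω + (W n ω)^2) ∂μ :=
            integral_congr_ae (ae_of_all μ fun ω => hexpand ω)
          have i1 : ∫ ω, (M n ω ^ 2 + 2 * (M n * W n) ω + W n ω ^ 2) ∂μ
              = ∫ ω, (M n ω ^ 2 + 2 * (M n * W n) ω) ∂μ + ∫ ω, W n ω ^ 2 ∂μ :=
            integral_add ((hM2int n).add ((hMWint n).const_mul 2)) (hW2int n)
          have i2 : ∫ ω, (M n ω ^ 2 + 2 * (M n * W n) ω) ∂μ
              = ∫ ω, M n ω ^ 2 ∂μ + ∫ ω, 2 * (M n * W n) ω ∂μ :=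
            integral_add (hM2int n) ((hMWint n).const_mul 2)
          have i3 : ∫ ω, 2 * (M n * W n) ω ∂μ = 2 * ∫ ω, (M n * W n) ω ∂μ :=
            integral_const_mul 2 _
          rw [e1, i1, i2, i3]
        rw [hint1, hMWzero n, mul_zero, add_zero]
        have hstep : ∫ ω, (W n ω)^2 ∂μ ≤ ∫ ω, I n ω / (1 + N j h n ω)^2 ∂μ := by
          refine integral_mono (hW2int n) ?_ fun ω => hW2le n ω
          refine hIntOf _ 1 ((hImeas n).div ((measurable_const.add (hNmeas n)).pow_const 2))
            fun ω => ?_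
          rw [abs_div, abs_of_nonneg (hInn n ω), abs_of_nonneg (hNp2 n ω).le]
          rw [div_le_one (hNp2 n ω)]
          have h1' : (1:ℝ) ≤ (1 + N j h n ω)^2 := by nlinarith [hNnn n ω]
          linarith [hIle n ω]
        have hsum : ∫ ω, ∑ i ∈ Finset.range (n+1), I i ω / (1 + N j h i ω)^2 ∂μ
            = ∫ ω, ∑ i ∈ Finset.range n, I i ω / (1 + N j h i ω)^2 ∂μ
              + ∫ ω, I n ω / (1 + N j h n ω)^2 ∂μ := by
          rw [← integral_add (hFint n) (hIntOf (fun ω => I n ω / (1 + N j h n ω)^2) 1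
            ((hImeas n).div ((measurable_const.add (hNmeas n)).pow_const 2)) fun ω => by
              rw [abs_div, abs_of_nonneg (hInn n ω), abs_of_nonneg (hNp2 n ω).le]
              rw [div_le_one (hNp2 n ω)]
              have h1' : (1:ℝ) ≤ (1 + N j h n ω)^2 := by nlinarith [hNnn n ω]
              linarith [hIle n ω])]
          exact integral_congr_ae (ae_of_all μ fun ω => by
            simp [Finset.sum_range_succ])
        rw [hsum]
        linarith
  have hFle2 : ∀ n ω, ∑ i ∈ Finset.range n, I i ω / (1 + N j h i ω)^2 ≤ 2 := by
    intro n ω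
    have hNeq : ∀ i, N j h i ω = ∑ k ∈ Finset.range i, I k ω := fun i => hNsum i ω
    have key := stmt10_invariant (fun i => I i ω) (fun i => hI01 i ω) n
    have h2 : (0:ℝ) < 1 + ∑ k ∈ Finset.range n, I k ω := by
      have : 0 ≤ ∑ k ∈ Finset.range n, I k ω := Finset.sum_nonneg fun k _ => hInn k ω
      linarith
    calc ∑ i ∈ Finset.range n, I i ω / (1 + N j h i ω)^2
        = ∑ i ∈ Finset.range n, I i ω / (1 + ∑ k ∈ Finset.range i, I k ω)^2 := by
          refine Finset.sum_congr rfl fun i _ => by rw [hNeq i]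
      _ ≤ 2 - 2 / (1 + ∑ k ∈ Finset.range n, I k ω) := key
      _ ≤ 2 := by
          have : 0 < 2 / (1 + ∑ k ∈ Finset.range n, I k ω) := by positivity
          linarith
  have hsq2 : ∀ n, ∫ ω, (M n ω)^2 ∂μ ≤ 2 := by
    intro n
    refine le_trans (hsq n) ?_
    calc ∫ ω, ∑ i ∈ Finset.range n, I i ω / (1 + N j h i ω)^2 ∂μ
        ≤ ∫ _ω, (2:ℝ) ∂μ := integral_mono (hFint n) (integrable_const 2) fun ω => hFle2 n ω
      _ = 2 := by simp
  have hL1 : ∀ n, ∫ ω, |M n ω| ∂μ ≤ 2 := by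
    intro n
    have habs_le : ∀ ω, |M n ω| ≤ ((M n ω)^2 + 1) / 2 := by
      intro ω
      nlinarith [sq_nonneg (|M n ω| - 1), sq_abs (M n ω)]
    have hint : Integrable (fun ω => ((M n ω)^2 + 1) / 2) μ :=
      (((hM2int n).add (integrable_const 1)).div_const 2)
    have h1 : ∫ ω, |M n ω| ∂μ ≤ ∫ ω, ((M n ω)^2 + 1) / 2 ∂μ :=
      integral_mono (hMint n).abs hint habs_le
    have h2 : ∫ ω, ((M n ω)^2 + 1) / 2 ∂μ = (∫ ω, (M n ω)^2 ∂μ + 1) / 2 := by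
      rw [integral_div, integral_add (hM2int n) (integrable_const 1)]
      simp
    rw [h2] at h1
    linarith [hsq2 n]
  have hbdd : ∀ n, eLpNorm (M n) 1 μ ≤ ((2 : ℝ≥0) : ℝ≥0∞) := by
    intro n
    rw [eLpNorm_one_eq_lintegral_enorm, ← ofReal_integral_norm_eq_lintegral_enorm (hMint n)]
    calc ENNReal.ofReal (∫ ω, ‖M n ω‖ ∂μ) ≤ ENNReal.ofReal 2 :=
        ENNReal.ofReal_le_ofReal (by
          simp only [Real.norm_eq_abs]
          exact hL1 n)
      _ = ((2 : ℝ≥0) : ℝ≥0∞) := by norm_num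
  have hae := hMart.submartingale.ae_tendsto_limitProcess hbdd
  -- pointwise facts about S and N for all strata
  have hS0k : ∀ k n ω, 0 ≤ S j k n ω := by
    intro k n ω
    rw [hS]
    refine Finset.sum_nonneg fun i _ => ?_
    split
    · rcases hY01 i ω with hy | hy <;> rw [hy] <;> norm_num
    · exact le_rfl
  have hSlek : ∀ k n ω, S j k n ω ≤ N j k n ω := by
    intro k n ω
    rw [hS, hN]
    refine Finset.sum_le_sum fun i _ => ?_
    split
    · rcases hY01 i ω with hy | hy <;> rw [hy] <;> norm_num
    · exact le_rfl
  have hN0k : ∀ k n ω, 0 ≤ N j k n ω := fun k n ω => le_trans (hS0k k n ω) (hSlek k n ω)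
  -- final pointwise argument
  filter_upwards [hNtop, hae] with ω hNω hMω
  -- Kronecker's lemma
  have hNmono : Monotone fun n => N j h n ω := by
    refine monotone_nat_of_le_succ fun n => ?_
    rw [hNsucc n ω]
    linarith [hInn n ω]
  have hb1 : ∀ n, (1:ℝ) ≤ 1 + N j h n ω := fun n => by linarith [hNnn n ω]
  have hbmono : Monotone fun n => 1 + N j h n ω := fun a b hab => by
    simp only [add_le_add_iff_left]
    exact hNmono hab
  have hbtop : Tendsto (fun n => 1 + N j h n ω) atTop atTop :=
    tendsto_atTop_add_const_left _ 1 hNω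
  have hconvM : Tendsto (fun n => ∑ i ∈ Finset.range n, D i ω / (1 + N j h i ω))
      atTop (nhds (ℱ.limitProcess M μ ω)) := by
    have heq : (fun n => ∑ i ∈ Finset.range n, D i ω / (1 + N j h i ω))
        = fun n => M n ω := by
      funext n
      rw [hMdef]
      exact Finset.sum_congr rfl fun i _ => div_eq_inv_mul _ _
    rw [heq]
    exact hMω
  have hkron := stmt10_kronecker (fun n => 1 + N j h n ω) (fun i => D i ω)
    hb1 hbmono hbtop _ hconvM
  -- translate to S, N
  have hSDsum : ∀ n, ∑ i ∈ Finset.range n, D i ω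
      = S j h n ω - θ j h * N j h n ω := by
    intro n
    rw [hS, hN, Finset.mul_sum, ← Finset.sum_sub_distrib]
    refine Finset.sum_congr rfl fun i _ => ?_
    rw [hDdef]
    by_cases hc' : Z i ω = h ∧ δ i ω = j
    · simp only [hIdef, if_pos hc']; ring
    · simp only [hIdef, if_neg hc']; ring
  have hkron2 : Tendsto (fun n => (S j h n ω - θ j h * N j h n ω) / (1 + N j h n ω))
      atTop (nhds 0) := by
    refine hkron.congr fun n => ?_
    rw [hSDsum n]
  have hNge1 : ∀ᶠ n in atTop, (1:ℝ) ≤ N j h n ω := hNω.eventually_ge_atTop 1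
  -- θhat converges
  have hratio : Tendsto (fun n => (1 + N j h n ω) / N j h n ω) atTop (nhds 1) := by
    have hinv : Tendsto (fun n => (N j h n ω)⁻¹) atTop (nhds 0) :=
      hNω.inv_tendsto_atTop
    have h1 : Tendsto (fun n => (N j h n ω)⁻¹ + 1) atTop (nhds (0 + 1)) :=
      hinv.add tendsto_const_nhds
    rw [zero_add] at h1
    refine Tendsto.congr' ?_ h1
    filter_upwards [hNge1] with n hn
    have hne : N j h n ω ≠ 0 := by linarith
    field_simp
  have hθhattendsto : Tendsto (fun n => θhat j h n ω) atTop (nhds (θ j h)) := by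
    have hprod := hkron2.mul hratio
    rw [zero_mul] at hprod
    have heq : ∀ᶠ n in atTop, (S j h n ω - θ j h * N j h n ω) / (1 + N j h n ω)
        * ((1 + N j h n ω) / N j h n ω) = θhat j h n ω - θ j h := by
      filter_upwards [hNge1] with n hn
      have hne : N j h n ω ≠ 0 := by linarith
      have hne2 : 1 + N j h n ω ≠ 0 := by linarith
      rw [hθhat]
      field_simp
    have hsub : Tendsto (fun n => θhat j h n ω - θ j h) atTop (nhds 0) :=
      Tendsto.congr' heq hprod
    have := hsub.add (tendsto_const_nhds (x := θ j h))
    rw [zero_add] at this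
    refine this.congr fun n => ?_
    ring
  -- P is close to θhat
  have hPclose : ∀ᶠ n in atTop, |P j h n ω - θhat j h n ω| ≤ c n := by
    filter_upwards [hNge1] with n hn
    set A := (Finset.univ.erase h).filter
      (fun k => |θhat j k n ω - θhat j h n ω| ≤ c n) with hA
    have hsumN : (0:ℝ) ≤ ∑ k ∈ A, N j k n ω :=
      Finset.sum_nonneg fun k _ => hN0k k n ω
    have hdenne : N j h n ω + ∑ k ∈ A, N j k n ω ≠ 0 := by
      have : (0:ℝ) < N j h n ω + ∑ k ∈ A, N j k n ω := by linarith
      exact ne_of_gt this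
    rw [hP, ← hA, if_neg hdenne]
    exact stmt10_pool A (S j h n ω) (N j h n ω) (θhat j h n ω) (c n)
      (fun k => S j k n ω) (fun k => N j k n ω) (fun k => θhat j k n ω)
      hn (hθhat j h n ω) (fun k _ => hS0k k n ω) (fun k _ => hSlek k n ω)
      (fun k _ => hθhat j k n ω) (hcpos n).le
      (fun k hk => (Finset.mem_filter.1 hk).2)
  have hPsub : Tendsto (fun n => P j h n ω - θhat j h n ω) atTop (nhds 0) := by
    refine squeeze_zero_norm' ?_ hclim
    filter_upwards [hPclose] with n hn
    rw [Real.norm_eq_abs]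
    exact hn
  have := hPsub.add hθhattendsto
  rw [zero_add] at this
  refine this.congr fun n => ?_
  ring
end

section
/- Let σ = s_·/n_· and define g(x) = l(σx, (1−σ)x) for x > 0. Then lim_{x→∞} x²·g'(x) = −(1/2)·(n_·/s_·)·(n_·/f_·)·[ Σ_{h=1}^H n_h² (s_h/n_h − σ)² − n_· σ(1−σ) ]. -/
open MeasureTheory ProbabilityTheory Filter

lemma auxLogGamma (a : ℝ) (ha : 0 < a) (m : ℕ) :
    Real.log (Real.Gamma (a + m)) =
      Real.log (Real.Gamma a) + ∑ i ∈ Finset.range m, Real.log (a + i) := by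
  induction m with
  | zero => simp
  | succ m ih =>
    have hpos : (0:ℝ) < a + m := by positivity
    have h1 : a + ((m:ℝ) + 1) = (a + m) + 1 := by ring
    rw [Nat.cast_add, Nat.cast_one, h1, Real.Gamma_add_one hpos.ne',
      Real.log_mul hpos.ne' (Real.Gamma_pos_of_pos hpos).ne', Finset.sum_range_succ, ih]
    ring

lemma auxAtom (c : ℝ) (hc : 0 < c) (i : ℝ) (hi : 0 ≤ i) :
    Tendsto (fun x : ℝ => x ^ 2 * c / (c * x + i) - x) atTop (nhds (-(i / c))) := by
  have h1 : Tendsto (fun x : ℝ => c + i / x) atTop (nhds (c + 0)) :=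
    tendsto_const_nhds.add (tendsto_const_nhds.div_atTop tendsto_id)
  rw [add_zero] at h1
  have h2 : Tendsto (fun x : ℝ => -i / (c + i / x)) atTop (nhds (-i / c)) :=
    tendsto_const_nhds.div h1 hc.ne'
  have h3 : -i / c = -(i / c) := by ring
  rw [h3] at h2
  refine h2.congr' ?_
  filter_upwards [eventually_gt_atTop 0] with x hx
  have hd : 0 < c * x + i := by positivity
  field_simp
  ring

lemma auxGauss : ∀ m : ℕ, (∑ i ∈ Finset.range m, (i : ℝ)) = m * (m - 1) / 2 := by
  intro m
  induction m with
  | zero => simp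
  | succ m ih =>
    rw [Finset.sum_range_succ, ih]
    push_cast
    ring

lemma auxKey (B : ℝ → ℝ → ℝ)
    (hB : ∀ a b, B a b = Real.Gamma a * Real.Gamma b / Real.Gamma (a + b))
    (a b : ℝ) (ha : 0 < a) (hb : 0 < b) (s f : ℕ) :
    Real.log (B (a + s) (b + f)) - Real.log (B a b) =
      (∑ i ∈ Finset.range s, Real.log (a + i)) + (∑ j ∈ Finset.range f, Real.log (b + j))
        - ∑ k ∈ Finset.range (s + f), Real.log (a + b + k) := by
  have has : (0:ℝ) < a + s := by positivity
  have hbf : (0:ℝ) < b + f := by positivity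
  have hab : (0:ℝ) < a + b := by positivity
  have habn : a + s + (b + f) = (a + b) + ((s + f : ℕ) : ℝ) := by push_cast; ring
  rw [hB, hB, habn,
    Real.log_div (by positivity : Real.Gamma (a+s) * Real.Gamma (b+f) ≠ 0)
      (Real.Gamma_pos_of_pos (by positivity)).ne',
    Real.log_mul (Real.Gamma_pos_of_pos has).ne' (Real.Gamma_pos_of_pos hbf).ne',
    Real.log_div (by positivity : Real.Gamma a * Real.Gamma b ≠ 0)
      (Real.Gamma_pos_of_pos hab).ne',
    Real.log_mul (Real.Gamma_pos_of_pos ha).ne' (Real.Gamma_pos_of_pos hb).ne',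
    auxLogGamma a ha s, auxLogGamma b hb f, auxLogGamma (a+b) hab (s+f)]
  ring

lemma auxAlg (S N σ : ℝ) (h0 : σ ≠ 0) (h1 : 1 - σ ≠ 0) :
    2*σ*(1-σ) * (-(S*(S-1)/2)/σ - ((N-S)*((N-S)-1)/2)/(1-σ) + N*(N-1)/2)
      = -(S-σ*N)^2 + N*(σ*(1-σ)) + (1-2*σ)*(S-σ*N) := by
  field_simp
  ring

lemma auxAtomDeriv (c : ℝ) (i : ℝ) (y : ℝ) (h : 0 < c * y + i) :
    HasDerivAt (fun y => Real.log (c * y + i)) (c / (c * y + i)) y := by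
  have h1 : HasDerivAt (fun y : ℝ => c * y + i) c y := by
    simpa using ((hasDerivAt_id y).const_mul c).add_const i
  simpa using h1.log h.ne'

theorem stmt17
    (H : ℕ) (hH : 1 ≤ H)
    (n s : Fin H → ℕ)
    (hn1 : ∀ h, 1 ≤ n h) (hsn : ∀ h, s h ≤ n h)
    (sdot ndot fdot : ℝ)
    (hsdot : sdot = ∑ h, (s h : ℝ)) (hndot : ndot = ∑ h, (n h : ℝ))
    (hfdot : fdot = ndot - sdot)
    (hs1 : 1 ≤ sdot) (hf1 : 1 ≤ fdot)
    (B : ℝ → ℝ → ℝ)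
    (hB : ∀ a b, B a b = Real.Gamma a * Real.Gamma b / Real.Gamma (a + b))
    (l : ℝ → ℝ → ℝ)
    (hl : ∀ α β, l α β =
      ∑ h, (Real.log (B (α + (s h : ℝ)) (β + ((n h : ℝ) - (s h : ℝ)))) - Real.log (B α β)))
    (σ : ℝ) (hσ : σ = sdot / ndot) :
    Tendsto (fun x => x^2 * deriv (fun y => l (σ * y) ((1 - σ) * y)) x)
      atTop
      (nhds (-(1/2) * (ndot / sdot) * (ndot / fdot) *
        ((∑ h, (n h : ℝ)^2 * ((s h : ℝ) / (n h : ℝ) - σ)^2) - ndot * σ * (1 - σ)))) := by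
  have hsd : 0 < sdot := by linarith
  have hnd : 0 < ndot := by linarith
  have hfd : 0 < fdot := by linarith
  have hσ0 : 0 < σ := by rw [hσ]; positivity
  have hσ1 : σ < 1 := by rw [hσ, div_lt_one hnd]; linarith
  have h1σ : 0 < 1 - σ := by linarith
  set φ : ℝ → ℝ := fun y => ∑ h,
    ((∑ i ∈ Finset.range (s h), Real.log (σ*y + i))
      + (∑ j ∈ Finset.range (n h - s h), Real.log ((1-σ)*y + j))
      - ∑ k ∈ Finset.range (n h), Real.log (y + k)) with hφ
  set D : ℝ → ℝ := fun y => ∑ h,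
    ((∑ i ∈ Finset.range (s h), σ/(σ*y + i))
      + (∑ j ∈ Finset.range (n h - s h), (1-σ)/((1-σ)*y + j))
      - ∑ k ∈ Finset.range (n h), 1/(1*y + k)) with hDdef
  have heq : ∀ y, 0 < y → l (σ*y) ((1-σ)*y) = φ y := by
    intro y hy
    rw [hl]
    refine Finset.sum_congr rfl fun h _ => ?_
    have h1 : ((n h : ℝ) - (s h : ℝ)) = ((n h - s h : ℕ) : ℝ) := by
      rw [Nat.cast_sub (hsn h)]
    rw [h1, auxKey B hB _ _ (by positivity) (by positivity)]
    have h2 : s h + (n h - s h) = n h := Nat.add_sub_cancel' (hsn h)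
    have h3 : σ*y + (1-σ)*y = y := by ring
    rw [h2, h3]
  have hD : ∀ y, 0 < y → HasDerivAt φ (D y) y := by
    intro y hy
    refine HasDerivAt.fun_sum fun h _ => ?_
    refine HasDerivAt.sub (HasDerivAt.add ?_ ?_) ?_
    · exact HasDerivAt.fun_sum fun i _ =>
        auxAtomDeriv σ i y (by positivity)
    · exact HasDerivAt.fun_sum fun j _ =>
        auxAtomDeriv (1-σ) j y (by positivity)
    · exact HasDerivAt.fun_sum fun k _ => by
        simpa only [one_mul] using auxAtomDeriv 1 (k:ℝ) y (by positivity)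
  have hderiv_eq : ∀ x, 0 < x → deriv (fun y => l (σ*y) ((1-σ)*y)) x = D x := by
    intro x hx
    have hev : (fun y => l (σ*y) ((1-σ)*y)) =ᶠ[nhds x] φ := by
      filter_upwards [isOpen_Ioi.mem_nhds hx] with y hy using heq y hy
    rw [hev.deriv_eq, (hD x hx).deriv]
  -- limit of the explicit expression
  set L : ℝ := ∑ h : Fin H,
    ((∑ i ∈ Finset.range (s h), -((i:ℝ)/σ))
      + (∑ j ∈ Finset.range (n h - s h), -((j:ℝ)/(1-σ)))
      - ∑ k ∈ Finset.range (n h), -((k:ℝ)/1)) with hLdef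
  have hlim : Tendsto (fun x => ∑ h : Fin H,
      ((∑ i ∈ Finset.range (s h), (x^2*σ/(σ*x + i) - x))
        + (∑ j ∈ Finset.range (n h - s h), (x^2*(1-σ)/((1-σ)*x + j) - x))
        - ∑ k ∈ Finset.range (n h), (x^2*1/(1*x + k) - x))) atTop (nhds L) := by
    refine tendsto_finset_sum _ fun h _ => ?_
    refine Tendsto.sub (Tendsto.add ?_ ?_) ?_
    · exact tendsto_finset_sum _ fun i _ => auxAtom σ hσ0 i (Nat.cast_nonneg i)
    · exact tendsto_finset_sum _ fun j _ => auxAtom (1-σ) h1σ j (Nat.cast_nonneg j)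
    · exact tendsto_finset_sum _ fun k _ => auxAtom 1 one_pos k (Nat.cast_nonneg k)
  have hE : ∀ x : ℝ, x^2 * D x = ∑ h : Fin H,
      ((∑ i ∈ Finset.range (s h), (x^2*σ/(σ*x + i) - x))
        + (∑ j ∈ Finset.range (n h - s h), (x^2*(1-σ)/((1-σ)*x + j) - x))
        - ∑ k ∈ Finset.range (n h), (x^2*1/(1*x + k) - x)) := by
    intro x
    rw [hDdef, Finset.mul_sum]
    refine Finset.sum_congr rfl fun h _ => ?_
    simp only [Finset.sum_sub_distrib, Finset.sum_const, Finset.card_range, nsmul_eq_mul,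
      mul_add, mul_sub, Finset.mul_sum, ← mul_div_assoc]
    have hc : ((n h - s h : ℕ) : ℝ) = (n h : ℝ) - (s h : ℝ) := Nat.cast_sub (hsn h)
    rw [hc]
    ring
  have hLR : L = -(1/2) * (ndot / sdot) * (ndot / fdot) *
      ((∑ h, (n h : ℝ)^2 * ((s h : ℝ) / (n h : ℝ) - σ)^2) - ndot * σ * (1 - σ)) := by
    have hsσ : sdot = σ * ndot := by
      rw [hσ]; field_simp
    have hfσ : fdot = (1 - σ) * ndot := by rw [hfdot, hsσ]; ring
    have hz : ∑ h : Fin H, ((s h : ℝ) - σ * (n h : ℝ)) = 0 := by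
      rw [Finset.sum_sub_distrib, ← Finset.mul_sum, ← hsdot, ← hndot, hsσ]; ring
    have hQ : (∑ h, (n h : ℝ)^2 * ((s h : ℝ) / (n h : ℝ) - σ)^2)
        = ∑ h : Fin H, ((s h : ℝ) - σ * (n h : ℝ))^2 := by
      refine Finset.sum_congr rfl fun h _ => ?_
      have hn : ((n h : ℝ)) ≠ 0 := Nat.cast_ne_zero.mpr (by have := hn1 h; omega)
      field_simp
    rw [hLdef, hQ]
    have hcancel : (2 * σ * (1 - σ)) ≠ 0 := by positivity
    refine mul_left_cancel₀ hcancel ?_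
    rw [Finset.mul_sum]
    have hstep : ∀ h : Fin H, 2 * σ * (1 - σ) *
        ((∑ i ∈ Finset.range (s h), -((i:ℝ)/σ))
          + (∑ j ∈ Finset.range (n h - s h), -((j:ℝ)/(1-σ)))
          - ∑ k ∈ Finset.range (n h), -((k:ℝ)/1))
        = -(((s h : ℝ) - σ * (n h : ℝ))^2) + (n h : ℝ) * (σ * (1 - σ))
            + (1 - 2*σ) * ((s h : ℝ) - σ * (n h : ℝ)) := by
      intro h
      have e1 : ∑ i ∈ Finset.range (s h), -((i:ℝ)/σ)
          = -((((s h:ℝ))*((s h:ℝ)-1)/2)/σ) := by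
        rw [Finset.sum_neg_distrib, ← Finset.sum_div, auxGauss]
      have e2 : ∑ j ∈ Finset.range (n h - s h), -((j:ℝ)/(1-σ))
          = -(((((n h:ℝ)-(s h:ℝ)))*((((n h:ℝ)-(s h:ℝ)))-1)/2)/(1-σ)) := by
        rw [Finset.sum_neg_distrib, ← Finset.sum_div, auxGauss, Nat.cast_sub (hsn h)]
      have e3 : ∑ k ∈ Finset.range (n h), -((k:ℝ)/1)
          = -((((n h:ℝ))*((n h:ℝ)-1)/2)/1) := by
        rw [Finset.sum_neg_distrib, ← Finset.sum_div, auxGauss]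
      rw [e1, e2, e3]
      linear_combination auxAlg (s h : ℝ) (n h : ℝ) σ hσ0.ne' h1σ.ne'
    calc ∑ h : Fin H, 2 * σ * (1 - σ) *
        ((∑ i ∈ Finset.range (s h), -((i:ℝ)/σ))
          + (∑ j ∈ Finset.range (n h - s h), -((j:ℝ)/(1-σ)))
          - ∑ k ∈ Finset.range (n h), -((k:ℝ)/1))
        = ∑ h : Fin H, (-(((s h : ℝ) - σ * (n h : ℝ))^2) + (n h : ℝ) * (σ * (1 - σ))
            + (1 - 2*σ) * ((s h : ℝ) - σ * (n h : ℝ))) :=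
          Finset.sum_congr rfl fun h _ => hstep h
      _ = -(∑ h : Fin H, ((s h : ℝ) - σ * (n h : ℝ))^2) + ndot * (σ * (1 - σ))
            + (1 - 2*σ) * ∑ h : Fin H, ((s h : ℝ) - σ * (n h : ℝ)) := by
          rw [Finset.sum_add_distrib, Finset.sum_add_distrib, Finset.sum_neg_distrib,
            ← Finset.sum_mul, ← Finset.mul_sum, ← hndot]
      _ = 2 * σ * (1 - σ) * (-(1/2) * (ndot / sdot) * (ndot / fdot) *
            ((∑ h : Fin H, ((s h : ℝ) - σ * (n h : ℝ))^2) - ndot * σ * (1 - σ))) := by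
          rw [hz, mul_zero, add_zero, hsσ, hfσ]
          field_simp
          ring
  rw [← hLR]
  refine (hlim.congr' ?_)
  filter_upwards [eventually_gt_atTop 0] with x hx
  rw [← hE x, hderiv_eq x hx]
end

section
/- The function l is continuous on (0,∞)², and for each fixed β > 0 one has l(α,β) → −∞ as α → 0⁺, while for each fixed α > 0 one has l(α,β) → −∞ as β → 0⁺. -/
open MeasureTheory ProbabilityTheory Filter

noncomputable def gB (x y : ℝ) : ℝ := Real.log (Real.Gamma x * Real.Gamma y / Real.Gamma (x + y))

lemma gB_symm (x y : ℝ) : gB x y = gB y x := by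
  unfold gB; rw [mul_comm, add_comm]

lemma gamma_contAt {x : ℝ} (hx : 0 < x) : ContinuousAt Real.Gamma x :=
  (Real.differentiableAt_Gamma (fun m => ne_of_gt (by have : (0:ℝ) ≤ m := Nat.cast_nonneg m; linarith))).continuousAt

lemma gB_contAt {z : ℝ × ℝ} (hx : 0 < z.1) (hy : 0 < z.2) :
    ContinuousAt (fun p : ℝ × ℝ => gB p.1 p.2) z := by
  obtain ⟨x, y⟩ := z
  simp only at hx hy
  have h1 : ContinuousAt (fun p : ℝ × ℝ => Real.Gamma p.1) (x, y) :=
    by have := (gamma_contAt hx).comp (continuousAt_fst (p := (x, y))); exact this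
  have h2 : ContinuousAt (fun p : ℝ × ℝ => Real.Gamma p.2) (x, y) :=
    by have := (gamma_contAt hy).comp (continuousAt_snd (p := (x, y))); exact this
  have h3 : ContinuousAt (fun p : ℝ × ℝ => Real.Gamma (p.1 + p.2)) (x, y) :=
    by have := (gamma_contAt (x := x + y) (by positivity)).comp (f := fun p : ℝ × ℝ => p.1 + p.2) ((continuousAt_fst (p := (x, y))).add continuousAt_snd); exact this
  have hne : Real.Gamma (x + y) ≠ 0 := (Real.Gamma_pos_of_pos (by positivity)).ne'
  have harg : Real.Gamma x * Real.Gamma y / Real.Gamma (x + y) ≠ 0 := by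
    have := Real.Gamma_pos_of_pos hx
    have := Real.Gamma_pos_of_pos hy
    have := Real.Gamma_pos_of_pos (show (0:ℝ) < x + y by positivity)
    positivity
  exact ContinuousAt.log ((h1.mul h2).div h3 hne) harg

lemma gB_eq {x y : ℝ} (hx : 0 < x) (hy : 0 < y) :
    gB x y = Real.log (Real.Gamma x) + Real.log (Real.Gamma y) - Real.log (Real.Gamma (x + y)) := by
  unfold gB
  rw [Real.log_div (by positivity) (Real.Gamma_pos_of_pos (by positivity)).ne',
    Real.log_mul (Real.Gamma_pos_of_pos hx).ne' (Real.Gamma_pos_of_pos hy).ne']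

lemma logGamma_contAt (c : ℝ) (hc : 0 < c) :
    ContinuousAt (fun α : ℝ => Real.log (Real.Gamma (α + c))) 0 := by
  have h : ContinuousAt (fun α : ℝ => Real.Gamma (α + c)) 0 :=
    (gamma_contAt (by simpa using hc)).comp (continuousAt_id.add continuousAt_const)
  refine (Real.continuousAt_log ?_).comp h
  simpa using (Real.Gamma_pos_of_pos (by simpa using hc)).ne'

lemma term_zero {β b : ℝ} (hβ : 0 < β) (hb : 0 ≤ b) :
    ∃ c, Tendsto (fun α => gB α (β + b) - gB α β) (nhdsWithin 0 (Set.Ioi 0)) (nhds c) := by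
  set φ : ℝ → ℝ := fun α =>
    Real.log (Real.Gamma (β + b)) - Real.log (Real.Gamma (α + (β + b)))
      - Real.log (Real.Gamma β) + Real.log (Real.Gamma (α + β))
  have hβb : 0 < β + b := by linarith
  have heq : ∀ α ∈ Set.Ioi (0:ℝ), gB α (β + b) - gB α β = φ α := by
    intro α hα
    rw [gB_eq hα hβb, gB_eq hα hβ]
    ring
  have hφ : ContinuousAt φ 0 := by
    have h1 := logGamma_contAt (β + b) hβb
    have h2 := logGamma_contAt β hβ
    exact ((continuousAt_const.sub h1).sub continuousAt_const).add h2
  refine ⟨φ 0, ?_⟩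
  refine Tendsto.congr' ?_ (hφ.continuousWithinAt.tendsto)
  filter_upwards [self_mem_nhdsWithin] with α hα using (heq α hα).symm

lemma term_pos {β a b : ℝ} (hβ : 0 < β) (ha : 0 < a) (hb : 0 ≤ b) :
    Tendsto (fun α => gB (α + a) (β + b) - gB α β) (nhdsWithin 0 (Set.Ioi 0)) atBot := by
  have hβb : 0 < β + b := by linarith
  set ψ : ℝ → ℝ := fun α =>
    Real.log (Real.Gamma (α + a)) + Real.log (Real.Gamma (β + b))
      - Real.log (Real.Gamma (α + (a + (β + b))))
      - Real.log (Real.Gamma (α + 1)) - Real.log (Real.Gamma β) + Real.log (Real.Gamma (α + β))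
  have heq : ∀ α ∈ Set.Ioi (0:ℝ), gB (α + a) (β + b) - gB α β = ψ α + Real.log α := by
    intro α hα
    simp only [Set.mem_Ioi] at hα
    have hΓ : Real.Gamma (α + 1) = α * Real.Gamma α := Real.Gamma_add_one hα.ne'
    have hlog : Real.log (Real.Gamma (α + 1)) = Real.log α + Real.log (Real.Gamma α) := by
      rw [hΓ, Real.log_mul hα.ne' (Real.Gamma_pos_of_pos hα).ne']
    rw [gB_eq (by positivity) hβb, gB_eq hα hβ]
    simp only [ψ]
    rw [show α + a + (β + b) = α + (a + (β + b)) by ring, hlog]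
    ring
  have hψ : ContinuousAt ψ 0 := by
    have h1 := logGamma_contAt a ha
    have h2 := logGamma_contAt (a + (β + b)) (by linarith)
    have h3 := logGamma_contAt 1 one_pos
    have h4 := logGamma_contAt β hβ
    exact ((((h1.add continuousAt_const).sub h2).sub h3).sub continuousAt_const).add h4
  have hψ' : Tendsto ψ (nhdsWithin 0 (Set.Ioi 0)) (nhds (ψ 0)) :=
    hψ.continuousWithinAt.tendsto
  have hlogtend : Tendsto Real.log (nhdsWithin 0 (Set.Ioi 0)) atBot :=
    Real.tendsto_log_nhdsGT_zero
  have hψle : ∀ᶠ α in nhdsWithin 0 (Set.Ioi 0), ψ α ≤ ψ 0 + 1 :=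
    hψ'.eventually_le_const (lt_add_one _)
  have : Tendsto (fun α => ψ α + Real.log α) (nhdsWithin 0 (Set.Ioi 0)) atBot :=
    tendsto_atBot_add_left_of_ge' _ (ψ 0 + 1) hψle hlogtend
  refine Tendsto.congr' ?_ this
  filter_upwards [self_mem_nhdsWithin] with α hα using (heq α hα).symm

lemma main_tendsto {H : ℕ} (a b : Fin H → ℝ) (ha : ∀ h, 0 ≤ a h) (hb : ∀ h, 0 ≤ b h)
    (h0 : ∃ h, 0 < a h) {β : ℝ} (hβ : 0 < β) :
    Tendsto (fun α => ∑ h, (gB (α + a h) (β + b h) - gB α β))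
      (nhdsWithin 0 (Set.Ioi 0)) atBot := by
  obtain ⟨h0, hh0⟩ := h0
  set L := nhdsWithin (0:ℝ) (Set.Ioi 0)
  set t : Fin H → ℝ → ℝ := fun h α => gB (α + a h) (β + b h) - gB α β
  -- each term over erase h0 is eventually bounded above
  have hbound : ∀ h : Fin H, ∃ C, ∀ᶠ α in L, t h α ≤ C := by
    intro h
    rcases eq_or_lt_of_le (ha h) with hz | hp
    · obtain ⟨c, hc⟩ := term_zero hβ (hb h)
      refine ⟨c + 1, ?_⟩
      have : (fun α => gB α (β + b h) - gB α β) =ᶠ[L] t h := by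
        filter_upwards [self_mem_nhdsWithin] with α _
        simp [t, ← hz]
      exact (hc.congr' this).eventually_le_const (lt_add_one _)
    · exact ⟨0, (term_pos hβ hp (hb h)).eventually (eventually_le_atBot 0)⟩
  choose C hC using hbound
  have hsum : ∀ᶠ α in L, ∑ h ∈ Finset.univ.erase h0, t h α ≤ ∑ h ∈ Finset.univ.erase h0, C h := by
    have : ∀ᶠ α in L, ∀ h ∈ Finset.univ.erase h0, t h α ≤ C h := by
      rw [eventually_all_finset]
      exact fun h _ => hC h
    filter_upwards [this] with α hα using Finset.sum_le_sum hα
  have hsplit : ∀ α, ∑ h, t h α = t h0 α + ∑ h ∈ Finset.univ.erase h0, t h α := by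
    intro α
    exact (Finset.add_sum_erase _ _ (Finset.mem_univ h0)).symm
  have hmain : Tendsto (fun α => t h0 α + ∑ h ∈ Finset.univ.erase h0, t h α) L atBot :=
    tendsto_atBot_add_right_of_ge' L _ (term_pos hβ hh0 (hb h0)) hsum
  simpa only [← hsplit] using hmain

theorem stmt18
    (H : ℕ) (hH : 1 ≤ H)
    (n s : Fin H → ℕ)
    (hn1 : ∀ h, 1 ≤ n h) (hsn : ∀ h, s h ≤ n h)
    (sdot ndot fdot : ℝ)
    (hsdot : sdot = ∑ h, (s h : ℝ)) (hndot : ndot = ∑ h, (n h : ℝ))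
    (hfdot : fdot = ndot - sdot)
    (hs1 : 1 ≤ sdot) (hf1 : 1 ≤ fdot)
    (B : ℝ → ℝ → ℝ)
    (hB : ∀ a b, B a b = Real.Gamma a * Real.Gamma b / Real.Gamma (a + b))
    (l : ℝ → ℝ → ℝ)
    (hl : ∀ α β, l α β =
      ∑ h, (Real.log (B (α + (s h : ℝ)) (β + ((n h : ℝ) - (s h : ℝ)))) - Real.log (B α β)))
    :
    ContinuousOn (fun q : ℝ × ℝ => l q.1 q.2) {q : ℝ × ℝ | 0 < q.1 ∧ 0 < q.2} ∧
    (∀ β : ℝ, 0 < β → Tendsto (fun α => l α β) (nhdsWithin 0 (Set.Ioi 0)) atBot) ∧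
    (∀ α : ℝ, 0 < α → Tendsto (fun β => l α β) (nhdsWithin 0 (Set.Ioi 0)) atBot) := by
  have hlg : ∀ α β : ℝ, l α β =
      ∑ h, (gB (α + (s h : ℝ)) (β + ((n h : ℝ) - (s h : ℝ))) - gB α β) := by
    intro α β
    rw [hl]
    congr 1
    funext h
    rw [hB, hB]
    rfl
  have hfnn : ∀ h, (0:ℝ) ≤ (n h : ℝ) - (s h : ℝ) := by
    intro h
    have := hsn h
    have : (s h : ℝ) ≤ (n h : ℝ) := by exact_mod_cast this
    linarith
  have hsnn : ∀ h, (0:ℝ) ≤ (s h : ℝ) := fun h => Nat.cast_nonneg _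
  -- existence of positive s and positive f indices
  have hex_s : ∃ h, 0 < (s h : ℝ) := by
    by_contra hcon
    push_neg at hcon
    have : ∀ h, (s h : ℝ) = 0 := fun h => le_antisymm (hcon h) (hsnn h)
    have : sdot = 0 := by rw [hsdot]; exact Finset.sum_eq_zero fun h _ => this h
    linarith
  have hex_f : ∃ h, 0 < (n h : ℝ) - (s h : ℝ) := by
    by_contra hcon
    push_neg at hcon
    have hz : ∀ h, (n h : ℝ) - (s h : ℝ) = 0 := fun h => le_antisymm (hcon h) (hfnn h)
    have : fdot = 0 := by
      rw [hfdot, hndot, hsdot, ← Finset.sum_sub_distrib]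
      exact Finset.sum_eq_zero fun h _ => hz h
    linarith
  refine ⟨?_, ?_, ?_⟩
  · -- continuity
    intro q hq
    obtain ⟨hq1, hq2⟩ := hq
    have : ContinuousAt (fun q : ℝ × ℝ => l q.1 q.2) q := by
      have : ContinuousAt (fun q : ℝ × ℝ =>
          ∑ h, (gB (q.1 + (s h : ℝ)) (q.2 + ((n h : ℝ) - (s h : ℝ))) - gB q.1 q.2)) q := by
        apply tendsto_finset_sum
        intro h _
        apply ContinuousAt.sub
        · have hin : ContinuousAt
              (fun q : ℝ × ℝ => (q.1 + (s h : ℝ), q.2 + ((n h : ℝ) - (s h : ℝ)))) q :=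
            (continuousAt_fst.add continuousAt_const).prodMk
              (continuousAt_snd.add continuousAt_const)
          exact ContinuousAt.comp (g := fun p : ℝ × ℝ => gB p.1 p.2)
            (gB_contAt (show (0:ℝ) < q.1 + (s h : ℝ) by have := hsnn h; linarith)
              (show (0:ℝ) < q.2 + ((n h : ℝ) - (s h : ℝ)) by have := hfnn h; linarith)) hin
        · simpa using gB_contAt hq1 hq2
      exact this.congr (by
        filter_upwards with q using by rw [hlg q.1 q.2])
    exact this.continuousWithinAt
  · -- α → 0⁺
    intro β hβ
    have := main_tendsto (fun h => (s h : ℝ)) (fun h => (n h : ℝ) - (s h : ℝ))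
      hsnn hfnn hex_s hβ
    refine Tendsto.congr' ?_ this
    filter_upwards with α using (hlg α β).symm
  · -- β → 0⁺
    intro α hα
    have := main_tendsto (fun h => (n h : ℝ) - (s h : ℝ)) (fun h => (s h : ℝ))
      hfnn hsnn hex_f hα
    refine Tendsto.congr' ?_ this
    filter_upwards with β
    rw [hlg α β]
    congr 1
    funext h
    rw [gB_symm, gB_symm α β]
end
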